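/- The masking distance satisfies the triangle inequality: for transition systems A, A' (with fault set F'), and A'' (with fault set F'' ⊇ F'), δ_m(A, A'') ≤ δ_m(A, A') + δ_m(A', A''). -/

import Mathlib

/-- A labelled transition system with state type `S`, label type `L`. -/
structure TS (S L : Type) where
  step : S → L → S → Prop
  init : S

/-- Strong masking simulation between a nominal system `A` (over `Σ = L \ F`)
and an implementation `A'` (over `Σ ∪ F`), where the nominal system is
augmented with masking self-loops (so the mask-move condition B.3 asks for a
state `t` with `s →M t`, i.e. `t = s`, related to `t'`). -/
def IsMaskingSim {S S' L : Type} (A : TS S L) (A' : TS S' L) (F : Set L)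
    (M : S → S' → Prop) : Prop :=
  M A.init A'.init ∧
  ∀ s s', M s s' →
    (∀ e, e ∉ F → ∀ t, A.step s e t → ∃ t', A'.step s' e t' ∧ M t t') ∧
    (∀ e, e ∉ F → ∀ t', A'.step s' e t' → ∃ t, A.step s e t ∧ M t t') ∧
    (∀ f, f ∈ F → ∀ t', A'.step s' f t' → ∃ t, t = s ∧ M t t')

/-- States of the (strong) masking game graph: refuter states `(s, #, s', R)`,
verifier states `(s, σ^i, s', V)` (the `Bool` is `true` for side 1, i.e. a
pending label coming from the nominal system `A`, and `false` for side 2),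
and the error state. -/
inductive GS (S S' L : Type) : Type where
  | R : S → S' → GS S S' L
  | V : S → L → Bool → S' → GS S S' L
  | err : GS S S' L

/-- Basic edges of the masking game graph for nominal `A`, implementation `A'`,
fault labels `F` and masking label `m`. -/
inductive GEdge {S S' L : Type} (A : TS S L) (A' : TS S' L) (F : Set L) (m : L) :
    GS S S' L → L → GS S S' L → Prop where
  | chA {s s' σ t} : σ ∉ F → σ ≠ m → A.step s σ t →
      GEdge A A' F m (.R s s') σ (.V t σ true s')
  | chA' {s s' σ t'} : σ ≠ m → A'.step s' σ t' →
      GEdge A A' F m (.R s s') σ (.V s σ false t')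
  | matchA' {s σ s' t'} : σ ∉ F → σ ≠ m → A'.step s' σ t' →
      GEdge A A' F m (.V s σ true s') σ (.R s t')
  | matchA {s σ s' t} : σ ∉ F → σ ≠ m → A.step s σ t →
      GEdge A A' F m (.V s σ false s') σ (.R t s')
  | mask {s σ s'} : σ ∈ F →
      GEdge A A' F m (.V s σ false s') m (.R s s')

/-- Full edge relation of the masking game graph: basic edges, plus, for any
state with no outgoing basic edge (in particular the error state), edges
labelled by any `σ ∈ Σ` to the error state. -/
def fullEdge {S S' L : Type} (A : TS S L) (A' : TS S' L) (F : Set L) (m : L)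
    (v : GS S S' L) (σ : L) (w : GS S S' L) : Prop :=
  GEdge A A' F m v σ w ∨
    ((∀ l u, ¬ GEdge A A' F m v l u) ∧ σ ∉ F ∧ σ ≠ m ∧ w = GS.err)

/-- `true` on refuter states (including the error state). -/
def isRefB {S S' L : Type} : GS S S' L → Bool
  | .V _ _ _ _ => false
  | _ => true

/-- A verifier node whose pending label is a fault. -/
def isFaultV {S S' L : Type} (F : Set L) : GS S S' L → Prop
  | .V _ σ _ _ => σ ∈ F
  | _ => False

/-- The fault-stratified attractor sets `U^j_i` (first index `j`, second `i`):
`U^0_i = U^j_0 = ∅`, `U^1_1 = {err}`, and `U^{j+2}_{i+1}` collects refuter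
nodes with a successor in `U^{j+1}_{i+1}`, non-fault verifier nodes all of
whose successors are in `∪_{j'≤j+1} U^{j'}_{i+1}` with one in `U^{j+1}_{i+1}`,
and fault verifier nodes all of whose successors are in
`∪_{i'≤i, j'≤j+1} U^{j'}_{i'}` with one in `U^{j+1}_i`. -/
def Uset {α : Type} (post : α → Set α) (isRef isFault : α → Prop) (verr : α) :
    ℕ → ℕ → Set α
  | 0, _ => ∅
  | 1, i => if i = 1 then {verr} else ∅
  | _+2, 0 => ∅
  | j+2, i+1 =>
      {v | isRef v ∧ ∃ w ∈ post v, w ∈ Uset post isRef isFault verr (j+1) (i+1)} ∪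
      {v | ¬ isRef v ∧ ¬ isFault v ∧
            (∀ w ∈ post v, ∃ j' : Fin (j+2), w ∈ Uset post isRef isFault verr j' (i+1)) ∧
            ∃ w ∈ post v, w ∈ Uset post isRef isFault verr (j+1) (i+1)} ∪
      {v | ¬ isRef v ∧ isFault v ∧
            (∀ w ∈ post v, ∃ i' : Fin (i+1), ∃ j' : Fin (j+2),
              w ∈ Uset post isRef isFault verr j' i') ∧
            ∃ w ∈ post v, w ∈ Uset post isRef isFault verr (j+1) i}
  termination_by j _ => j
  decreasing_by all_goals first | exact j'.isLt | omega

/-- The sets `U^j_i` instantiated on the masking game graph of `A`, `A'`. -/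
def UsetG {S S' L : Type} (A : TS S L) (A' : TS S' L) (F : Set L) (m : L) :
    ℕ → ℕ → Set (GS S S' L) :=
  Uset (fun v => {w | ∃ l, fullEdge A A' F m v l w})
    (fun v => isRefB v = true) (isFaultV F) GS.err

/-- History-dependent strategies: given the history and the current state,
choose a label and a next state. -/
abbrev Strat (α L : Type) := List (α × L) → α → L × α

/-- The history (sequence of state/label pairs) of a play up to step `n`. -/
def hist {α L : Type} (ρ : ℕ → α) (σ : ℕ → L) (n : ℕ) : List (α × L) :=
  (List.range n).map fun k => (ρ k, σ k)

/-- `ρ, σ` form an (infinite) play of the graph `E` from `v0`. -/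
def IsPlay {α L : Type} (E : α → L → α → Prop) (v0 : α) (ρ : ℕ → α) (σ : ℕ → L) : Prop :=
  ρ 0 = v0 ∧ ∀ n, E (ρ n) (σ n) (ρ (n+1))

/-- The play `ρ, σ` conforms to the strategy `π` of the player owning the
states where `isRef · = mine`. -/
def Conf {α L : Type} (isRef : α → Bool) (mine : Bool) (π : Strat α L)
    (ρ : ℕ → α) (σ : ℕ → L) : Prop :=
  ∀ n, isRef (ρ n) = mine → (σ n, ρ (n+1)) = π (hist ρ σ n) (ρ n)

/-- Conformance to a memoryless (positional) strategy `f`. -/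
def MemConf {α L : Type} (isRef : α → Bool) (mine : Bool) (f : α → L × α)
    (ρ : ℕ → α) (σ : ℕ → L) : Prop :=
  ∀ n, isRef (ρ n) = mine → (σ n, ρ (n+1)) = f (ρ n)

/-- Auxiliary construction of the outcome of two strategies: history and
current state after `n` steps. -/
def outAux {α L : Type} (isRef : α → Bool) (πR πV : Strat α L) (v0 : α) :
    ℕ → List (α × L) × α
  | 0 => ([], v0)
  | n+1 =>
      let p := outAux isRef πR πV v0 n
      let c := if isRef p.2 then πR p.1 p.2 else πV p.1 p.2
      (p.1 ++ [(p.2, c.1)], c.2)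

/-- State sequence of the outcome `out(πR, πV)`. -/
def outSt {α L : Type} (isRef : α → Bool) (πR πV : Strat α L) (v0 : α) (n : ℕ) : α :=
  (outAux isRef πR πV v0 n).2

/-- Label sequence of the outcome `out(πR, πV)`. -/
def outLb {α L : Type} (isRef : α → Bool) (πR πV : Strat α L) (v0 : α) (n : ℕ) : L :=
  (if isRef (outSt isRef πR πV v0 n)
    then πR (outAux isRef πR πV v0 n).1 (outSt isRef πR πV v0 n)
    else πV (outAux isRef πR πV v0 n).1 (outSt isRef πR πV v0 n)).1

open Classical in
/-- The masking payoff `f_m(ρ) = lim_n pr1(v_n) / (1 + Σ_{i≤n} pr0(v_i))`,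
where `v_n = (χ_F(σ_n), χ_{err}(ρ_{n+1}))`. -/
noncomputable def payoff {α L : Type} (F : Set L) (verr : α)
    (ρ : ℕ → α) (σ : ℕ → L) : ℝ :=
  Filter.limUnder Filter.atTop fun n =>
    (if ρ (n+1) = verr then (1:ℝ) else 0) /
      (1 + ∑ i ∈ Finset.range (n+1), (if σ i ∈ F then (1:ℝ) else 0))

/-- Refuter strategies (valid at refuter nodes). -/
abbrev RStrat {S S' L : Type} (A : TS S L) (A' : TS S' L) (F : Set L) (m : L) :=
  {π : Strat (GS S S' L) L //
    ∀ h v, isRefB v = true → fullEdge A A' F m v (π h v).1 (π h v).2}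

/-- Verifier strategies (valid at verifier nodes). -/
abbrev VStrat {S S' L : Type} (A : TS S L) (A' : TS S' L) (F : Set L) (m : L) :=
  {π : Strat (GS S S' L) L //
    ∀ h v, isRefB v = false → fullEdge A A' F m v (π h v).1 (π h v).2}

/-- The value of the quantitative masking game (the masking distance
`δ_m(A, A')`): sup over refuter strategies of the inf over verifier
strategies of the payoff of the outcome play. -/
noncomputable def maskingValue {S S' L : Type} (A : TS S L) (A' : TS S' L)
    (F : Set L) (m : L) : ℝ :=
  ⨆ πR : RStrat A A' F m, ⨅ πV : VStrat A A' F m,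
    payoff F GS.err
      (outSt isRefB πR.1 πV.1 (GS.R A.init A'.init))
      (outLb isRefB πR.1 πV.1 (GS.R A.init A'.init))


/-! ### Auxiliary development -/

open Filter
open scoped Classical

section PayoffLemmas

variable {α L : Type} (F : Set L) (verr : α)

/-- Fault count before step `N`. -/
noncomputable def cnt (σ : ℕ → L) (N : ℕ) : ℝ :=
  ∑ i ∈ Finset.range N, (if σ i ∈ F then (1:ℝ) else 0)

lemma cnt_nonneg (σ : ℕ → L) (N : ℕ) : 0 ≤ cnt F σ N := by
  apply Finset.sum_nonneg; intro i _; split <;> norm_num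

lemma cnt_mono (σ : ℕ → L) {N M : ℕ} (h : N ≤ M) : cnt F σ N ≤ cnt F σ M := by
  unfold cnt
  apply Finset.sum_le_sum_of_subset_of_nonneg (Finset.range_subset_range.2 h)
  intro i _ _; split <;> norm_num

lemma payoff_of_never {ρ : ℕ → α} {σ : ℕ → L} (h : ∀ n, ρ (n+1) ≠ verr) :
    payoff F verr ρ σ = 0 := by
  have : (fun n => (if ρ (n+1) = verr then (1:ℝ) else 0) /
      (1 + ∑ i ∈ Finset.range (n+1), (if σ i ∈ F then (1:ℝ) else 0)))
      = fun _ => (0:ℝ) := by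
    funext n; rw [if_neg (h n), zero_div]
  rw [payoff, this]
  exact Filter.Tendsto.limUnder_eq tendsto_const_nhds

lemma payoff_of_absorb {ρ : ℕ → α} {σ : ℕ → L} (N : ℕ)
    (h : ∀ i, N ≤ i → ρ (i+1) = verr ∧ σ i ∉ F) :
    payoff F verr ρ σ = 1 / (1 + cnt F σ N) := by
  have hsum : ∀ n, N ≤ n → (∑ i ∈ Finset.range (n+1), (if σ i ∈ F then (1:ℝ) else 0)) = cnt F σ N := by
    intro n hn
    induction n with
    | zero =>
      have h0 := (h 0 hn).2
      have hN0 : N = 0 := Nat.le_zero.mp hn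
      subst hN0
      rw [Finset.sum_range_succ, if_neg h0, add_zero]
      rfl
    | succ k ih =>
      rcases Nat.lt_or_ge N (k+1) with hlt | hge
      · have hk : N ≤ k := Nat.lt_succ_iff.mp hlt
        rw [Finset.sum_range_succ, ih hk, if_neg (h (k+1) (Nat.le_of_lt hlt)).2, add_zero]
      · have : N = k + 1 := le_antisymm hn hge
        subst this
        rw [Finset.sum_range_succ, if_neg (h (k+1) le_rfl).2, add_zero]
        rfl
  apply Filter.Tendsto.limUnder_eq
  apply Filter.Tendsto.congr' (f₁ := fun _ => 1 / (1 + cnt F σ N))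
  · rw [Filter.EventuallyEq, Filter.eventually_atTop]
    refine ⟨N, fun n hn => ?_⟩
    rw [hsum n hn, if_pos (h n hn).1]
  · exact tendsto_const_nhds

end PayoffLemmas


section GameLemmas

variable {SA SB L : Type} (X : TS SA L) (Y : TS SB L) (F : Set L) (m : L)

lemma gedge_src_not_err {l : L} {w : GS SA SB L} (h : GEdge X Y F m .err l w) : False := by
  cases h

lemma gedge_tgt_not_err {v : GS SA SB L} {l : L} {w : GS SA SB L}
    (h : GEdge X Y F m v l w) : w ≠ .err := by
  cases h <;> simp

lemma fullEdge_err {l : L} {w : GS SA SB L} (h : fullEdge X Y F m .err l w) :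
    l ∉ F ∧ l ≠ m ∧ w = .err := by
  rcases h with h | ⟨_, h1, h2, h3⟩
  · exact absurd h (gedge_src_not_err X Y F m)
  · exact ⟨h1, h2, h3⟩

lemma fullEdge_into_err {v : GS SA SB L} {l : L} (h : fullEdge X Y F m v l .err) :
    l ∉ F ∧ l ≠ m := by
  rcases h with h | ⟨_, h1, h2, _⟩
  · exact absurd rfl (gedge_tgt_not_err X Y F m h)
  · exact ⟨h1, h2⟩

/-- Any full edge out of a verifier node has a non-fault label. -/
lemma fullEdge_V_label {a : SA} {σl : L} {bb : Bool} {b : SB} {l : L} {w : GS SA SB L}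
    (hm : m ∉ F) (h : fullEdge X Y F m (.V a σl bb b) l w) : l ∉ F := by
  rcases h with h | ⟨_, h1, _, _⟩
  · cases h <;> assumption
  · exact h1

/-- Any full edge with a fault label goes out of a refuter node into a fault
verifier node. -/
lemma fullEdge_fault {v : GS SA SB L} {l : L} {w : GS SA SB L}
    (hm : m ∉ F) (h : fullEdge X Y F m v l w) (hl : l ∈ F) :
    isRefB v = true ∧ isFaultV F w := by
  rcases h with h | ⟨_, h1, _, _⟩
  · cases h with
    | chA h1 _ _ => exact absurd hl h1
    | chA' _ _ => exact ⟨rfl, hl⟩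
    | matchA' h1 _ _ => exact absurd hl h1
    | matchA h1 _ _ => exact absurd hl h1
    | mask _ => exact absurd hl hm
  · exact absurd hl h1

/-- If some basic edge exists, any full edge is a basic edge. -/
lemma fullEdge_gedge {v : GS SA SB L} {l : L} {w : GS SA SB L}
    (h : fullEdge X Y F m v l w) {l' : L} {w' : GS SA SB L}
    (he : GEdge X Y F m v l' w') : GEdge X Y F m v l w := by
  rcases h with h | ⟨hno, _, _, _⟩
  · exact h
  · exact absurd he (hno l' w')

/-- A full edge out of a verifier node whose target is an `R` node is a basic edge. -/
lemma fullEdge_gedge_of_R {v : GS SA SB L} {l : L} {a : SA} {b : SB}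
    (h : fullEdge X Y F m v l (.R a b)) : GEdge X Y F m v l (.R a b) := by
  rcases h with h | ⟨_, _, _, h3⟩
  · exact h
  · exact absurd h3 (by simp)

lemma fullEdge_gedge_of_V {v : GS SA SB L} {l : L} {a : SA} {σl : L} {bb : Bool} {b : SB}
    (h : fullEdge X Y F m v l (.V a σl bb b)) : GEdge X Y F m v l (.V a σl bb b) := by
  rcases h with h | ⟨_, _, _, h3⟩
  · exact h
  · exact absurd h3 (by simp)

open Classical in
/-- Default valid move. -/
noncomputable def dfltMv (v : GS SA SB L) : L × GS SA SB L :=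
  if h : ∃ lw : L × GS SA SB L, fullEdge X Y F m v lw.1 lw.2 then h.choose else (m, .err)

lemma dfltMv_spec (hne : ∃ σl : L, σl ∉ F ∧ σl ≠ m) (v : GS SA SB L) :
    fullEdge X Y F m v (dfltMv X Y F m v).1 (dfltMv X Y F m v).2 := by
  classical
  have hex : ∃ lw : L × GS SA SB L, fullEdge X Y F m v lw.1 lw.2 := by
    by_cases hg : ∃ l w, GEdge X Y F m v l w
    · obtain ⟨l, w, hg⟩ := hg
      exact ⟨(l, w), Or.inl hg⟩
    · push_neg at hg
      obtain ⟨σl, h1, h2⟩ := hne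
      exact ⟨(σl, .err), Or.inr ⟨hg, h1, h2, rfl⟩⟩
  rw [dfltMv, dif_pos hex]
  exact hex.choose_spec

/-- Absorption: once in the error state, a play stays there with non-fault labels. -/
lemma play_absorb {v0 : GS SA SB L} {ρ : ℕ → GS SA SB L} {σ : ℕ → L}
    (hp : IsPlay (fullEdge X Y F m) v0 ρ σ) {N : ℕ} (hN : ρ N = .err) :
    ∀ i, N ≤ i → ρ i = .err ∧ σ i ∉ F := by
  intro i hi
  induction i with
  | zero =>
    have : N = 0 := Nat.le_zero.mp hi
    subst this
    have := fullEdge_err X Y F m (hN ▸ hp.2 0)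
    exact ⟨hN, this.1⟩
  | succ k ih =>
    rcases Nat.lt_or_ge N (k+1) with hlt | hge
    · have hk := ih (Nat.lt_succ_iff.mp hlt)
      have := fullEdge_err X Y F m (hk.1 ▸ hp.2 k)
      have hk1 : ρ (k+1) = .err := this.2.2 ▸ rfl
      have := fullEdge_err X Y F m (hk1 ▸ hp.2 (k+1))
      exact ⟨hk1, this.1⟩
    · have : N = k + 1 := le_antisymm hi hge
      subst this
      have := fullEdge_err X Y F m (hN ▸ hp.2 (k+1))
      exact ⟨hN, this.1⟩

lemma play_payoff_err {v0 : GS SA SB L} {ρ : ℕ → GS SA SB L} {σ : ℕ → L}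
    (hp : IsPlay (fullEdge X Y F m) v0 ρ σ) {N : ℕ} (hN : ρ (N+1) = .err) :
    payoff F (GS.err : GS SA SB L) ρ σ = 1 / (1 + cnt F σ N) := by
  apply payoff_of_absorb
  intro i hi
  rcases Nat.lt_or_ge N i with hlt | hge
  · have h1 := play_absorb X Y F m hp hN i hlt
    have h2 := play_absorb X Y F m hp hN (i+1) (Nat.le_succ_of_le hlt)
    exact ⟨h2.1, h1.2⟩
  · have : i = N := le_antisymm hge hi
    subst this
    refine ⟨hN, ?_⟩
    exact (fullEdge_into_err X Y F m (hN ▸ hp.2 i)).1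

lemma play_payoff_nonneg {v0 : GS SA SB L} {ρ : ℕ → GS SA SB L} {σ : ℕ → L}
    (hp : IsPlay (fullEdge X Y F m) v0 ρ σ) :
    0 ≤ payoff F (GS.err : GS SA SB L) ρ σ := by
  by_cases h : ∃ N, ρ (N+1) = .err
  · obtain ⟨N, hN⟩ := h
    rw [play_payoff_err X Y F m hp hN]
    have := cnt_nonneg F σ N
    positivity
  · push_neg at h
    rw [payoff_of_never _ _ h]

lemma play_payoff_le_one {v0 : GS SA SB L} {ρ : ℕ → GS SA SB L} {σ : ℕ → L}
    (hp : IsPlay (fullEdge X Y F m) v0 ρ σ) :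
    payoff F (GS.err : GS SA SB L) ρ σ ≤ 1 := by
  by_cases h : ∃ N, ρ (N+1) = .err
  · obtain ⟨N, hN⟩ := h
    rw [play_payoff_err X Y F m hp hN]
    have h0 := cnt_nonneg F σ N
    rw [div_le_one (by linarith)]
    linarith
  · push_neg at h
    rw [payoff_of_never _ _ h]
    norm_num

end GameLemmas


section OutLemmas

variable {α L : Type} (isRef : α → Bool) (πR πV : Strat α L) (v0 : α)

lemma hist_succ (ρ : ℕ → α) (σ : ℕ → L) (n : ℕ) :
    hist ρ σ (n+1) = hist ρ σ n ++ [(ρ n, σ n)] := by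
  simp [hist, List.range_succ]

lemma hist_length (ρ : ℕ → α) (σ : ℕ → L) (n : ℕ) : (hist ρ σ n).length = n := by
  simp [hist]

lemma outAux_fst (n : ℕ) :
    (outAux isRef πR πV v0 n).1 = hist (outSt isRef πR πV v0) (outLb isRef πR πV v0) n := by
  induction n with
  | zero => simp [outAux, hist]
  | succ k ih =>
    have hstep : (outAux isRef πR πV v0 (k+1)).1 =
        (outAux isRef πR πV v0 k).1 ++ [(outSt isRef πR πV v0 k, outLb isRef πR πV v0 k)] := rfl
    rw [hstep, ih, hist_succ]

lemma out_move (n : ℕ) :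
    (outLb isRef πR πV v0 n, outSt isRef πR πV v0 (n+1)) =
      (if isRef (outSt isRef πR πV v0 n) = true
        then πR (hist (outSt isRef πR πV v0) (outLb isRef πR πV v0) n) (outSt isRef πR πV v0 n)
        else πV (hist (outSt isRef πR πV v0) (outLb isRef πR πV v0) n) (outSt isRef πR πV v0 n)) := by
  rw [← outAux_fst]
  rfl

lemma out_isPlay {E : α → L → α → Prop}
    (hR : ∀ h v, isRef v = true → E v (πR h v).1 (πR h v).2)
    (hV : ∀ h v, isRef v = false → E v (πV h v).1 (πV h v).2) :
    IsPlay E v0 (outSt isRef πR πV v0) (outLb isRef πR πV v0) := by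
  refine ⟨rfl, fun n => ?_⟩
  have hm := out_move isRef πR πV v0 n
  by_cases hr : isRef (outSt isRef πR πV v0 n) = true
  · rw [if_pos hr] at hm
    have h1 : outLb isRef πR πV v0 n = (πR _ (outSt isRef πR πV v0 n)).1 := congrArg Prod.fst hm
    have h2 : outSt isRef πR πV v0 (n+1) = (πR _ (outSt isRef πR πV v0 n)).2 := congrArg Prod.snd hm
    rw [h1, h2]
    exact hR _ _ hr
  · rw [if_neg hr] at hm
    have h1 : outLb isRef πR πV v0 n = (πV _ (outSt isRef πR πV v0 n)).1 := congrArg Prod.fst hm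
    have h2 : outSt isRef πR πV v0 (n+1) = (πV _ (outSt isRef πR πV v0 n)).2 := congrArg Prod.snd hm
    rw [h1, h2]
    rw [Bool.not_eq_true] at hr
    exact hV _ _ hr

end OutLemmas

section CmpLemma

open scoped Classical

/-- The comparison lemma: if along two plays fault labels agree and whenever
the first play errs so does the second (as long as the second is alive), then
the payoff of the first is at most that of the second. -/
lemma payoff_cmp {SA SB SC SD L : Type} (X1 : TS SA L) (Y1 : TS SB L)
    (X2 : TS SC L) (Y2 : TS SD L) (F : Set L) (m : L)
    {v01 : GS SA SB L} {ρ : ℕ → GS SA SB L} {σ : ℕ → L}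
    {v02 : GS SC SD L} {ρ2 : ℕ → GS SC SD L} {σ2 : ℕ → L}
    (hp1 : IsPlay (fullEdge X1 Y1 F m) v01 ρ σ)
    (hp2 : IsPlay (fullEdge X2 Y2 F m) v02 ρ2 σ2)
    (hsync : ∀ n, (∀ k, k < n → ρ2 (k+1) ≠ .err) →
      ((σ n ∈ F ↔ σ2 n ∈ F) ∧ (ρ (n+1) = .err → ρ2 (n+1) = .err))) :
    payoff F (GS.err : GS SA SB L) ρ σ ≤ payoff F (GS.err : GS SC SD L) ρ2 σ2 := by
  by_cases hB : ∃ T, ρ2 (T+1) = .err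
  · set T := Nat.find hB with hTdef
    have hT : ρ2 (T+1) = .err := Nat.find_spec hB
    have hTmin : ∀ t, t < T → ρ2 (t+1) ≠ .err := fun t ht => Nat.find_min hB ht
    have h2 : payoff F (GS.err : GS SC SD L) ρ2 σ2 = 1 / (1 + cnt F σ2 T) :=
      play_payoff_err X2 Y2 F m hp2 hT
    by_cases hA : ∃ M, ρ (M+1) = .err
    · set M := Nat.find hA with hMdef
      have hM : ρ (M+1) = .err := Nat.find_spec hA
      have h1 : payoff F (GS.err : GS SA SB L) ρ σ = 1 / (1 + cnt F σ M) :=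
        play_payoff_err X1 Y1 F m hp1 hM
      have hTM : T ≤ M := by
        by_contra hcon
        push_neg at hcon
        have hpre : ∀ k, k < M → ρ2 (k+1) ≠ .err := fun k hk =>
          hTmin k (lt_trans hk hcon)
        have := (hsync M hpre).2 hM
        exact hTmin M hcon this
      have hcnteq : cnt F σ T = cnt F σ2 T := by
        unfold cnt
        apply Finset.sum_congr rfl
        intro i hi
        have hiT : i < T := Finset.mem_range.mp hi
        have hpre : ∀ k, k < i → ρ2 (k+1) ≠ .err := fun k hk =>
          hTmin k (lt_trans hk hiT)
        have hiff := (hsync i hpre).1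
        by_cases hσ : σ i ∈ F
        · rw [if_pos hσ, if_pos (hiff.mp hσ)]
        · rw [if_neg hσ, if_neg (fun hc => hσ (hiff.mpr hc))]
      rw [h1, h2, ← hcnteq]
      have hc2 := cnt_nonneg F σ T
      have hle : cnt F σ T ≤ cnt F σ M := cnt_mono F σ hTM
      apply one_div_le_one_div_of_le <;> linarith
    · push_neg at hA
      rw [payoff_of_never _ _ hA, h2]
      have := cnt_nonneg F σ2 T
      positivity
  · push_neg at hB
    have h2 : payoff F (GS.err : GS SC SD L) ρ2 σ2 = 0 := payoff_of_never _ _ hB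
    have h1 : payoff F (GS.err : GS SA SB L) ρ σ = 0 := by
      apply payoff_of_never
      intro n hn
      have hpre : ∀ k, k < n → ρ2 (k+1) ≠ .err := fun k _ => hB k
      exact hB n ((hsync n hpre).2 hn)
    rw [h1, h2]

end CmpLemma


section ValueLemmas

variable {SA SB L : Type} (X : TS SA L) (Y : TS SB L) (F : Set L) (m : L)

/-- The payoff of the outcome of a pair of strategies. -/
noncomputable def pay (πR : RStrat X Y F m) (πV : VStrat X Y F m) : ℝ :=
  payoff F GS.err
    (outSt isRefB πR.1 πV.1 (GS.R X.init Y.init))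
    (outLb isRefB πR.1 πV.1 (GS.R X.init Y.init))

lemma maskingValue_eq : maskingValue X Y F m = ⨆ πR, ⨅ πV, pay X Y F m πR πV := rfl

lemma out_isPlay_strats (πR : RStrat X Y F m) (πV : VStrat X Y F m) (v0 : GS SA SB L) :
    IsPlay (fullEdge X Y F m) v0 (outSt isRefB πR.1 πV.1 v0) (outLb isRefB πR.1 πV.1 v0) :=
  out_isPlay isRefB πR.1 πV.1 v0 πR.2 πV.2

lemma pay_nonneg (πR : RStrat X Y F m) (πV : VStrat X Y F m) : 0 ≤ pay X Y F m πR πV :=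
  play_payoff_nonneg X Y F m (out_isPlay_strats X Y F m πR πV _)

lemma pay_le_one (πR : RStrat X Y F m) (πV : VStrat X Y F m) : pay X Y F m πR πV ≤ 1 :=
  play_payoff_le_one X Y F m (out_isPlay_strats X Y F m πR πV _)

lemma rstrat_nonempty (hne : ∃ σl : L, σl ∉ F ∧ σl ≠ m) : Nonempty (RStrat X Y F m) :=
  ⟨⟨fun _ v => dfltMv X Y F m v, fun _ v _ => dfltMv_spec X Y F m hne v⟩⟩

lemma vstrat_nonempty (hne : ∃ σl : L, σl ∉ F ∧ σl ≠ m) : Nonempty (VStrat X Y F m) :=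
  ⟨⟨fun _ v => dfltMv X Y F m v, fun _ v _ => dfltMv_spec X Y F m hne v⟩⟩

lemma inner_bddBelow (πR : RStrat X Y F m) :
    BddBelow (Set.range fun πV => pay X Y F m πR πV) := by
  refine ⟨0, ?_⟩
  rintro x ⟨πV, rfl⟩
  exact pay_nonneg X Y F m πR πV

lemma inner_le_one (hne : ∃ σl : L, σl ∉ F ∧ σl ≠ m) (πR : RStrat X Y F m) : (⨅ πV, pay X Y F m πR πV) ≤ 1 := by
  obtain ⟨πV0⟩ := vstrat_nonempty X Y F m hne
  exact le_trans (ciInf_le (inner_bddBelow X Y F m πR) πV0) (pay_le_one X Y F m πR πV0)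

lemma inner_nonneg (hne : ∃ σl : L, σl ∉ F ∧ σl ≠ m) (πR : RStrat X Y F m) : 0 ≤ ⨅ πV, pay X Y F m πR πV := by
  have := vstrat_nonempty X Y F m hne
  exact le_ciInf (fun πV => pay_nonneg X Y F m πR πV)

lemma sup_bddAbove (hne : ∃ σl : L, σl ∉ F ∧ σl ≠ m) : BddAbove (Set.range fun πR => ⨅ πV, pay X Y F m πR πV) := by
  refine ⟨1, ?_⟩
  rintro x ⟨πR, rfl⟩
  exact inner_le_one X Y F m hne πR

lemma maskingValue_nonneg (hne : ∃ σl : L, σl ∉ F ∧ σl ≠ m) : 0 ≤ maskingValue X Y F m := by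
  obtain ⟨πR0⟩ := rstrat_nonempty X Y F m hne
  rw [maskingValue_eq]
  exact le_ciSup_of_le (sup_bddAbove X Y F m hne) πR0 (inner_nonneg X Y F m hne πR0)

lemma maskingValue_le_one (hne : ∃ σl : L, σl ∉ F ∧ σl ≠ m) : maskingValue X Y F m ≤ 1 := by
  have := rstrat_nonempty X Y F m hne
  rw [maskingValue_eq]
  exact ciSup_le (fun πR => inner_le_one X Y F m hne πR)

lemma le_maskingValue (hne : ∃ σl : L, σl ∉ F ∧ σl ≠ m) (πR : RStrat X Y F m) :
    (⨅ πV, pay X Y F m πR πV) ≤ maskingValue X Y F m := by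
  rw [maskingValue_eq]
  exact le_ciSup (sup_bddAbove X Y F m hne) πR

lemma maskingValue_le (hne : ∃ σl : L, σl ∉ F ∧ σl ≠ m) (c : ℝ) (h : ∀ πR : RStrat X Y F m, (⨅ πV, pay X Y F m πR πV) ≤ c) :
    maskingValue X Y F m ≤ c := by
  have := rstrat_nonempty X Y F m hne
  rw [maskingValue_eq]
  exact ciSup_le h

end ValueLemmas


section Attractor

set_option linter.unusedSectionVars false

open scoped Classical

variable {SA SB L : Type}

instance GS.finite [Finite SA] [Finite SB] [Finite L] : Finite (GS SA SB L) := by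
  have hinj : Function.Injective (fun v : GS SA SB L => match v with
    | .R a b => (Sum.inl (a, b) : (SA × SB) ⊕ ((SA × L × Bool × SB) ⊕ Unit))
    | .V a l bb b => Sum.inr (Sum.inl (a, l, bb, b))
    | .err => Sum.inr (Sum.inr ())) := by
    intro v w h
    cases v <;> cases w <;> simp_all
  exact Finite.of_injective _ hinj

variable [Finite SA] [Finite SB] [Finite L] (X : TS SA L) (Y : TS SB L) (F : Set L) (m : L)

/-- One step of the (restricted, fault-free) attractor construction. -/
def stepA (T : Set (GS SA SB L)) : Set (GS SA SB L) :=
  {v | v = .err} ∪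
  {v | isRefB v = true ∧ ∃ l w, fullEdge X Y F m v l w ∧ ¬ isFaultV F w ∧ w ∈ T} ∪
  {v | isRefB v = false ∧ ∀ l w, fullEdge X Y F m v l w → w ∈ T}

def AsetN : ℕ → Set (GS SA SB L)
  | 0 => ∅
  | n+1 => stepA X Y F m (AsetN n)

/-- The refuter's fault-free attractor of the error state. -/
def Ainf : Set (GS SA SB L) := {v | ∃ n, v ∈ AsetN X Y F m n}

lemma stepA_mono {T T' : Set (GS SA SB L)} (h : T ⊆ T') :
    stepA X Y F m T ⊆ stepA X Y F m T' := by
  intro v hv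
  rcases hv with (hv | ⟨h1, l, w, he, hf, hw⟩) | ⟨h1, h2⟩
  · exact Or.inl (Or.inl hv)
  · exact Or.inl (Or.inr ⟨h1, l, w, he, hf, h hw⟩)
  · exact Or.inr ⟨h1, fun l w he => h (h2 l w he)⟩

lemma AsetN_mono : ∀ {n n' : ℕ}, n ≤ n' → AsetN X Y F m n ⊆ AsetN X Y F m n' := by
  have hstep : ∀ n, AsetN X Y F m n ⊆ AsetN X Y F m (n+1) := by
    intro n
    induction n with
    | zero => intro v hv; exact absurd hv (by simp [AsetN])
    | succ k ih => exact stepA_mono X Y F m ih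
  intro n n' h
  induction h with
  | refl => exact subset_rfl
  | step _ ih => exact fun v hv => hstep _ (ih hv)

lemma err_mem_Ainf : (GS.err : GS SA SB L) ∈ Ainf X Y F m :=
  ⟨1, Or.inl (Or.inl rfl)⟩

lemma Ainf_ref_closed {v : GS SA SB L} {l : L} {w : GS SA SB L}
    (h1 : isRefB v = true) (he : fullEdge X Y F m v l w) (hf : ¬ isFaultV F w)
    (hw : w ∈ Ainf X Y F m) : v ∈ Ainf X Y F m := by
  obtain ⟨n, hn⟩ := hw
  exact ⟨n+1, Or.inl (Or.inr ⟨h1, l, w, he, hf, hn⟩)⟩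

lemma Ainf_ver_closed {v : GS SA SB L}
    (h1 : isRefB v = false) (h2 : ∀ l w, fullEdge X Y F m v l w → w ∈ Ainf X Y F m) :
    v ∈ Ainf X Y F m := by
  classical
  set Sv : Set (GS SA SB L) := {w | ∃ l, fullEdge X Y F m v l w} with hSv
  have hfin : Sv.Finite := Set.toFinite Sv
  set fs := hfin.toFinset with hfs
  set rk : GS SA SB L → ℕ := fun w => if h : w ∈ Ainf X Y F m then Nat.find h else 0 with hrk
  set N := fs.sup rk with hN
  have hall : ∀ l w, fullEdge X Y F m v l w → w ∈ AsetN X Y F m N := by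
    intro l w he
    have hw : w ∈ Ainf X Y F m := h2 l w he
    have hmem : w ∈ fs := by
      rw [hfs, Set.Finite.mem_toFinset]
      exact ⟨l, he⟩
    have hle : rk w ≤ N := Finset.le_sup hmem
    have : w ∈ AsetN X Y F m (rk w) := by
      rw [hrk]
      simp only []
      rw [dif_pos hw]
      exact Nat.find_spec hw
    exact AsetN_mono X Y F m hle this
  exact ⟨N+1, Or.inr ⟨h1, hall⟩⟩

/-- The rank of a node in the attractor. -/
noncomputable def rankA (v : GS SA SB L) : ℕ :=
  if h : v ∈ Ainf X Y F m then Nat.find h else 0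

lemma rankA_spec {v : GS SA SB L} (h : v ∈ Ainf X Y F m) :
    v ∈ AsetN X Y F m (rankA X Y F m v) := by
  rw [rankA, dif_pos h]
  exact Nat.find_spec h

lemma rankA_le {v : GS SA SB L} {n : ℕ} (h : v ∈ AsetN X Y F m n) :
    rankA X Y F m v ≤ n := by
  have hv : v ∈ Ainf X Y F m := ⟨n, h⟩
  rw [rankA, dif_pos hv]
  exact Nat.find_le h

lemma Ainf_ref_step {v : GS SA SB L} (hv : v ∈ Ainf X Y F m)
    (h1 : isRefB v = true) (h2 : v ≠ .err) :
    ∃ l w, fullEdge X Y F m v l w ∧ ¬ isFaultV F w ∧ w ∈ Ainf X Y F m ∧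
      rankA X Y F m w < rankA X Y F m v := by
  have hspec := rankA_spec X Y F m hv
  rcases hn : rankA X Y F m v with _ | k
  · rw [hn] at hspec
    exact absurd hspec (by simp [AsetN])
  · rw [hn] at hspec
    rcases hspec with (hv' | ⟨_, l, w, he, hf, hw⟩) | ⟨hvf, _⟩
    · exact absurd hv' h2
    · exact ⟨l, w, he, hf, ⟨k, hw⟩, lt_of_le_of_lt (rankA_le X Y F m hw) (by omega)⟩
    · rw [h1] at hvf; exact absurd hvf (by simp)

lemma Ainf_ver_step {v : GS SA SB L} (hv : v ∈ Ainf X Y F m)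
    (h1 : isRefB v = false) :
    ∀ l w, fullEdge X Y F m v l w → w ∈ Ainf X Y F m ∧
      rankA X Y F m w < rankA X Y F m v := by
  have hspec := rankA_spec X Y F m hv
  rcases hn : rankA X Y F m v with _ | k
  · rw [hn] at hspec
    exact absurd hspec (by simp [AsetN])
  · rw [hn] at hspec
    rcases hspec with (hv' | ⟨hvt, _⟩) | ⟨_, hall⟩
    · subst hv'; simp [isRefB] at h1
    · rw [h1] at hvt; exact absurd hvt (by simp)
    · intro l w he
      exact ⟨⟨k, hall l w he⟩, lt_of_le_of_lt (rankA_le X Y F m (hall l w he)) (by omega)⟩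

lemma Ainf_not_ref {v : GS SA SB L} {l : L} {w : GS SA SB L} (hv : v ∉ Ainf X Y F m)
    (h1 : isRefB v = true) (he : fullEdge X Y F m v l w) (hf : ¬ isFaultV F w) :
    w ∉ Ainf X Y F m :=
  fun hw => hv (Ainf_ref_closed X Y F m h1 he hf hw)

lemma Ainf_not_ver {v : GS SA SB L} (hv : v ∉ Ainf X Y F m) (h1 : isRefB v = false) :
    ∃ lw : L × GS SA SB L, fullEdge X Y F m v lw.1 lw.2 ∧ lw.2 ∉ Ainf X Y F m := by
  by_contra hcon
  push_neg at hcon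
  exact hv (Ainf_ver_closed X Y F m h1 (fun l w he => hcon (l, w) he))

open Classical in
/-- A memoryless verifier move that stays outside of the attractor. -/
noncomputable def safeMv (v : GS SA SB L) : L × GS SA SB L :=
  if h : ∃ lw : L × GS SA SB L, fullEdge X Y F m v lw.1 lw.2 ∧ lw.2 ∉ Ainf X Y F m
  then h.choose else dfltMv X Y F m v

lemma safeMv_spec (hne : ∃ σl : L, σl ∉ F ∧ σl ≠ m) (v : GS SA SB L) :
    fullEdge X Y F m v (safeMv X Y F m v).1 (safeMv X Y F m v).2 := by
  rw [safeMv]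
  split
  · next h => exact h.choose_spec.1
  · exact dfltMv_spec X Y F m hne v

lemma safeMv_safe {v : GS SA SB L} (h1 : isRefB v = false) (hv : v ∉ Ainf X Y F m) :
    (safeMv X Y F m v).2 ∉ Ainf X Y F m := by
  have hex := Ainf_not_ver X Y F m hv h1
  rw [safeMv, dif_pos hex]
  exact hex.choose_spec.2

open Classical in
/-- A memoryless refuter move that decreases the attractor rank. -/
noncomputable def attrMv (v : GS SA SB L) : L × GS SA SB L :=
  if h : ∃ lw : L × GS SA SB L, fullEdge X Y F m v lw.1 lw.2 ∧ ¬ isFaultV F lw.2 ∧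
      lw.2 ∈ Ainf X Y F m ∧ rankA X Y F m lw.2 < rankA X Y F m v
  then h.choose else dfltMv X Y F m v

lemma attrMv_spec (hne : ∃ σl : L, σl ∉ F ∧ σl ≠ m) (v : GS SA SB L) :
    fullEdge X Y F m v (attrMv X Y F m v).1 (attrMv X Y F m v).2 := by
  rw [attrMv]
  split
  · next h => exact h.choose_spec.1
  · exact dfltMv_spec X Y F m hne v

lemma attrMv_step {v : GS SA SB L} (hv : v ∈ Ainf X Y F m)
    (h1 : isRefB v = true) (h2 : v ≠ .err) :
    ¬ isFaultV F (attrMv X Y F m v).2 ∧ (attrMv X Y F m v).2 ∈ Ainf X Y F m ∧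
      rankA X Y F m (attrMv X Y F m v).2 < rankA X Y F m v := by
  obtain ⟨l, w, he, hf, hw, hr⟩ := Ainf_ref_step X Y F m hv h1 h2
  have hex : ∃ lw : L × GS SA SB L, fullEdge X Y F m v lw.1 lw.2 ∧ ¬ isFaultV F lw.2 ∧
      lw.2 ∈ Ainf X Y F m ∧ rankA X Y F m lw.2 < rankA X Y F m v :=
    ⟨(l, w), he, hf, hw, hr⟩
  rw [attrMv, dif_pos hex]
  exact hex.choose_spec.2

end Attractor


section CaseB

set_option linter.unusedSectionVars false

variable {SA SB L : Type} [Finite SA] [Finite SB] [Finite L]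
  (X : TS SA L) (Y : TS SB L) (F : Set L) (m : L)

/-- The attractor strategy as a refuter strategy. -/
noncomputable def attrStrat (hne : ∃ σl : L, σl ∉ F ∧ σl ≠ m) : RStrat X Y F m :=
  ⟨fun _ v => attrMv X Y F m v, fun _ v _ => attrMv_spec X Y F m hne v⟩

lemma attr_pay_one (hne : ∃ σl : L, σl ∉ F ∧ σl ≠ m) (hm : m ∉ F)
    (hinit : (GS.R X.init Y.init : GS SA SB L) ∈ Ainf X Y F m)
    (πV : VStrat X Y F m) :
    pay X Y F m (attrStrat X Y F m hne) πV = 1 := by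
  set πR := attrStrat X Y F m hne with hπR
  set v0 : GS SA SB L := GS.R X.init Y.init with hv0
  set ρ := outSt isRefB πR.1 πV.1 v0 with hρ
  set σ := outLb isRefB πR.1 πV.1 v0 with hσ
  have hp : IsPlay (fullEdge X Y F m) v0 ρ σ := out_isPlay_strats X Y F m πR πV v0
  have key : ∀ n, ρ n ∈ Ainf X Y F m →
      σ n ∉ F ∧ ρ (n+1) ∈ Ainf X Y F m ∧
      (ρ n ≠ .err → rankA X Y F m (ρ (n+1)) < rankA X Y F m (ρ n)) ∧
      (ρ n = .err → ρ (n+1) = .err) := by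
    intro n hn
    have hmv := out_move isRefB πR.1 πV.1 v0 n
    by_cases hr : isRefB (ρ n) = true
    · rw [if_pos hr] at hmv
      have hmv' : (σ n, ρ (n+1)) = attrMv X Y F m (ρ n) := hmv
      by_cases herr : ρ n = .err
      · have he := hp.2 n
        rw [herr] at he
        have := fullEdge_err X Y F m he
        exact ⟨this.1, this.2.2 ▸ err_mem_Ainf X Y F m, fun hc => absurd herr hc,
          fun _ => this.2.2⟩
      · have hstep := attrMv_step X Y F m hn hr herr
        have h1 : σ n = (attrMv X Y F m (ρ n)).1 := congrArg Prod.fst hmv'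
        have h2 : ρ (n+1) = (attrMv X Y F m (ρ n)).2 := congrArg Prod.snd hmv'
        refine ⟨?_, h2 ▸ hstep.2.1, fun _ => h2 ▸ hstep.2.2, fun hc => absurd hc herr⟩
        intro hσF
        have := fullEdge_fault X Y F m hm (hp.2 n) hσF
        rw [h2] at this
        exact hstep.1 this.2
    · rw [Bool.not_eq_true] at hr
      have hstep := Ainf_ver_step X Y F m hn hr (σ n) (ρ (n+1)) (hp.2 n)
      refine ⟨?_, hstep.1, fun _ => hstep.2, ?_⟩
      · intro hσF
        have := fullEdge_fault X Y F m hm (hp.2 n) hσF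
        rw [this.1] at hr
        simp at hr
      · intro hc
        rw [hc] at hr
        simp [isRefB] at hr
  have inv : ∀ n, ρ n ∈ Ainf X Y F m := by
    intro n
    induction n with
    | zero => exact hp.1 ▸ hinit
    | succ k ih => exact (key k ih).2.1
  have hlab : ∀ n, σ n ∉ F := fun n => (key n (inv n)).1
  have hterm : ∃ N, ρ N = .err := by
    by_contra hcon
    push_neg at hcon
    have hdec : ∀ n, rankA X Y F m (ρ (n+1)) < rankA X Y F m (ρ n) :=
      fun n => (key n (inv n)).2.2.1 (hcon n)
    have hbound : ∀ n, rankA X Y F m (ρ n) + n ≤ rankA X Y F m (ρ 0) := by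
      intro n
      induction n with
      | zero => omega
      | succ k ih => have := hdec k; omega
    have := hbound (rankA X Y F m (ρ 0) + 1)
    omega
  obtain ⟨N, hN⟩ := hterm
  have hN0 : N ≠ 0 := by
    intro hc
    rw [hc, hp.1] at hN
    simp [hv0] at hN
  obtain ⟨M, rfl⟩ := Nat.exists_eq_succ_of_ne_zero hN0
  have hpay := play_payoff_err X Y F m hp hN
  have hcnt : cnt F σ M = 0 := by
    unfold cnt
    apply Finset.sum_eq_zero
    intro i _
    rw [if_neg (hlab i)]
  rw [pay, ← hρ, ← hσ, hpay, hcnt]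
  norm_num

end CaseB


section CaseADefs

variable {S S' S'' L : Type}

/-- Read a state from a history list, with the current state as default. -/
def readSt {γ : Type} {L : Type} (junk : L) (h : List (γ × L)) (v : γ) (i : ℕ) : γ :=
  (h.getD i (v, junk)).1

open Classical in
/-- Replay reconstruction used by the composed refuter strategy for `G2`:
state after `k` rounds: the current `A`-state and the history of the `G`-play. -/
noncomputable def rstate (A : TS S L) (F'' : Set L) (m : L)
    (πR : Strat (GS S S'' L) L) (f1 : GS S S' L → L × GS S S' L)
    (g2 : ℕ → GS S' S'' L) : ℕ → S × List (GS S S'' L × L)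
  | 0 => (A.init, [])
  | k+1 =>
    let p := rstate A F'' m πR f1 g2 k
    match g2 (2*k) with
    | .R _ s'' =>
      let c := πR p.2 (.R p.1 s'')
      match c.2 with
      | .V t _ true _ => (t, p.2 ++ [((.R p.1 s''), c.1), ((.V t c.1 true s''), c.1)])
      | .V _ _ false t'' =>
        if c.1 ∈ F'' then (p.1, p.2 ++ [((.R p.1 s''), c.1), ((.V p.1 c.1 false t''), m)])
        else
          match g2 (2*k+2) with
          | .R t' _ =>
            match (f1 (.V p.1 c.1 false t')).2 with
            | .R tnew _ => (tnew, p.2 ++ [((.R p.1 s''), c.1), ((.V p.1 c.1 false t''), c.1)])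
            | _ => p
          | _ => p
      | _ => p
    | _ => p

open Classical in
/-- The composed refuter strategy for the game between `A'` and `A''`. -/
noncomputable def pR2 (A : TS S L) (A' : TS S' L) (A'' : TS S'' L) (F'' : Set L) (m : L)
    (πR : Strat (GS S S'' L) L) (f1 : GS S S' L → L × GS S S' L) (σ0 : L)
    (h2 : List (GS S' S'' L × L)) (v2 : GS S' S'' L) : L × GS S' S'' L :=
  match v2 with
  | .err => (σ0, .err)
  | .V a b c d => dfltMv A' A'' F'' m (.V a b c d)
  | .R s' s'' =>
    let p := rstate A F'' m πR f1 (readSt m h2 (.R s' s'')) (h2.length / 2)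
    let c := πR p.2 (.R p.1 s'')
    match c.2 with
    | .V t _ true _ =>
      match (f1 (.V t c.1 true s')).2 with
      | .R _ t' => (c.1, .V t' c.1 true s'')
      | _ => dfltMv A' A'' F'' m (.R s' s'')
    | .V _ _ false t'' => (c.1, .V s' c.1 false t'')
    | _ => dfltMv A' A'' F'' m (.R s' s'')

open Classical in
/-- The move of the composed verifier strategy for the game between `A` and
`A''`, given the current nodes of both games and the history of the `G2` play. -/
noncomputable def cmoveV (A : TS S L) (A'' : TS S'' L) (F'' : Set L) (m : L)
    (πV2s : Strat (GS S' S'' L) L) (f1 : GS S S' L → L × GS S S' L) (σ0 : L)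
    (v : GS S S'' L) (v2 : GS S' S'' L) (h2 : List (GS S' S'' L × L)) : L × GS S S'' L :=
  match v, v2 with
  | .V t σa true s''a, .V t' σb true s''b =>
    if σb = σa ∧ s''b = s''a then
      match (πV2s h2 (.V t' σb true s''b)).2 with
      | .R _ t'' => (σa, .R t t'')
      | .err => (σ0, .err)
      | .V _ _ _ _ => dfltMv A A'' F'' m (.V t σa true s''a)
    else dfltMv A A'' F'' m (.V t σa true s''a)
  | .V sa σa false t''a, .V s'c σb false t''b =>
    if σb = σa ∧ t''b = t''a then
      if σa ∈ F'' then (m, .R sa t''a)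
      else
        match (πV2s h2 (.V s'c σb false t''b)).2 with
        | .R t' _ =>
          match (f1 (.V sa σa false t')).2 with
          | .R tnew _ => (σa, .R tnew t''a)
          | _ => dfltMv A A'' F'' m (.V sa σa false t''a)
        | _ => dfltMv A A'' F'' m (.V sa σa false t''a)
    else dfltMv A A'' F'' m (.V sa σa false t''a)
  | _, _ => dfltMv A A'' F'' m v

/-- A configuration of the composed run: current node and history in both games. -/
structure CCfg (S S' S'' L : Type) where
  v : GS S S'' L
  h : List (GS S S'' L × L)
  v2 : GS S' S'' L
  h2 : List (GS S' S'' L × L)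

variable (A : TS S L) (A' : TS S' L) (A'' : TS S'' L) (F'' : Set L) (m : L)
  (πR : Strat (GS S S'' L) L) (πV2s : Strat (GS S' S'' L) L)
  (f1 : GS S S' L → L × GS S S' L) (σ0 : L)

/-- The `G`-side move from a configuration. -/
noncomputable def gmoveOf (A : TS S L) (A' : TS S' L) (A'' : TS S'' L) (F'' : Set L) (m : L)
    (πR : Strat (GS S S'' L) L) (πV2s : Strat (GS S' S'' L) L)
    (f1 : GS S S' L → L × GS S S' L) (σ0 : L) (c : CCfg S S' S'' L) : L × GS S S'' L :=
  if isRefB c.v = true then πR c.h c.v else cmoveV A A'' F'' m πV2s f1 σ0 c.v c.v2 c.h2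

/-- The `G2`-side move from a configuration. -/
noncomputable def g2moveOf (A : TS S L) (A' : TS S' L) (A'' : TS S'' L) (F'' : Set L) (m : L)
    (πR : Strat (GS S S'' L) L) (πV2s : Strat (GS S' S'' L) L)
    (f1 : GS S S' L → L × GS S S' L) (σ0 : L) (c : CCfg S S' S'' L) : L × GS S' S'' L :=
  if isRefB c.v2 = true then pR2 A A' A'' F'' m πR f1 σ0 c.h2 c.v2 else πV2s c.h2 c.v2

/-- The composed run. -/
noncomputable def crun (A : TS S L) (A' : TS S' L) (A'' : TS S'' L) (F'' : Set L) (m : L)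
    (πR : Strat (GS S S'' L) L) (πV2s : Strat (GS S' S'' L) L)
    (f1 : GS S S' L → L × GS S S' L) (σ0 : L) : ℕ → CCfg S S' S'' L
  | 0 => ⟨.R A.init A''.init, [], .R A'.init A''.init, []⟩
  | n+1 =>
    let c := crun A A' A'' F'' m πR πV2s f1 σ0 n
    ⟨(gmoveOf A A' A'' F'' m πR πV2s f1 σ0 c).2,
      c.h ++ [(c.v, (gmoveOf A A' A'' F'' m πR πV2s f1 σ0 c).1)],
      (g2moveOf A A' A'' F'' m πR πV2s f1 σ0 c).2,
      c.h2 ++ [(c.v2, (g2moveOf A A' A'' F'' m πR πV2s f1 σ0 c).1)]⟩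

open Classical in
/-- The composed verifier strategy for the game between `A` and `A''`. -/
noncomputable def pVcomp (A : TS S L) (A' : TS S' L) (A'' : TS S'' L) (F'' : Set L) (m : L)
    (πR : Strat (GS S S'' L) L) (πV2s : Strat (GS S' S'' L) L)
    (f1 : GS S S' L → L × GS S S' L) (σ0 : L)
    (h : List (GS S S'' L × L)) (v : GS S S'' L) : L × GS S S'' L :=
  let c := crun A A' A'' F'' m πR πV2s f1 σ0 h.length
  if c.v = v ∧ c.h = h then cmoveV A A'' F'' m πV2s f1 σ0 v c.v2 c.h2
  else dfltMv A A'' F'' m v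

lemma crun_zero :
    crun A A' A'' F'' m πR πV2s f1 σ0 0 = ⟨.R A.init A''.init, [], .R A'.init A''.init, []⟩ := by
  simp [crun]

lemma crun_succ (n : ℕ) :
    crun A A' A'' F'' m πR πV2s f1 σ0 (n+1) =
      ⟨(gmoveOf A A' A'' F'' m πR πV2s f1 σ0 (crun A A' A'' F'' m πR πV2s f1 σ0 n)).2,
        (crun A A' A'' F'' m πR πV2s f1 σ0 n).h ++
          [((crun A A' A'' F'' m πR πV2s f1 σ0 n).v,
            (gmoveOf A A' A'' F'' m πR πV2s f1 σ0 (crun A A' A'' F'' m πR πV2s f1 σ0 n)).1)],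
        (g2moveOf A A' A'' F'' m πR πV2s f1 σ0 (crun A A' A'' F'' m πR πV2s f1 σ0 n)).2,
        (crun A A' A'' F'' m πR πV2s f1 σ0 n).h2 ++
          [((crun A A' A'' F'' m πR πV2s f1 σ0 n).v2,
            (g2moveOf A A' A'' F'' m πR πV2s f1 σ0 (crun A A' A'' F'' m πR πV2s f1 σ0 n)).1)]⟩ := by
  conv_lhs => rw [crun]

lemma crun_h_length (n : ℕ) :
    (crun A A' A'' F'' m πR πV2s f1 σ0 n).h.length = n := by
  induction n with
  | zero => rw [crun_zero]; rfl
  | succ k ih => rw [crun_succ]; simp [ih]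

lemma crun_h2_length (n : ℕ) :
    (crun A A' A'' F'' m πR πV2s f1 σ0 n).h2.length = n := by
  induction n with
  | zero => rw [crun_zero]; rfl
  | succ k ih => rw [crun_succ]; simp [ih]

lemma crun_h_eq_hist (n : ℕ) :
    (crun A A' A'' F'' m πR πV2s f1 σ0 n).h =
      hist (fun i => (crun A A' A'' F'' m πR πV2s f1 σ0 i).v)
        (fun i => (gmoveOf A A' A'' F'' m πR πV2s f1 σ0 (crun A A' A'' F'' m πR πV2s f1 σ0 i)).1) n := by
  induction n with
  | zero => rw [crun_zero]; simp [hist]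
  | succ k ih => rw [crun_succ, hist_succ, ih]

lemma crun_h2_eq_hist (n : ℕ) :
    (crun A A' A'' F'' m πR πV2s f1 σ0 n).h2 =
      hist (fun i => (crun A A' A'' F'' m πR πV2s f1 σ0 i).v2)
        (fun i => (g2moveOf A A' A'' F'' m πR πV2s f1 σ0 (crun A A' A'' F'' m πR πV2s f1 σ0 i)).1) n := by
  induction n with
  | zero => rw [crun_zero]; simp [hist]
  | succ k ih => rw [crun_succ, hist_succ, ih]

/-- Absorption of the composed run at the `G2` error state. -/
lemma crun_absorb {n : ℕ} (h : (crun A A' A'' F'' m πR πV2s f1 σ0 n).v2 = .err) :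
    (crun A A' A'' F'' m πR πV2s f1 σ0 (n+1)).v2 = .err := by
  rw [crun_succ]
  show (g2moveOf A A' A'' F'' m πR πV2s f1 σ0 _).2 = _
  rw [g2moveOf, h]
  rfl

lemma crun_err_mono {k : ℕ} : ∀ n, (crun A A' A'' F'' m πR πV2s f1 σ0 k).v2 = .err →
    k ≤ n → (crun A A' A'' F'' m πR πV2s f1 σ0 n).v2 = .err := by
  intro n
  induction n with
  | zero => intro hc hk; exact (Nat.le_zero.mp hk) ▸ hc
  | succ j ih =>
    intro hc hk
    rcases Nat.lt_or_ge k (j+1) with hlt | hge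
    · exact crun_absorb A A' A'' F'' m πR πV2s f1 σ0 (ih hc (Nat.lt_succ_iff.mp hlt))
    · exact (le_antisymm hk hge) ▸ hc

lemma crun_alive {n k : ℕ} (hk : k ≤ n)
    (h : (crun A A' A'' F'' m πR πV2s f1 σ0 n).v2 ≠ .err) :
    (crun A A' A'' F'' m πR πV2s f1 σ0 k).v2 ≠ .err :=
  fun hc => h (crun_err_mono A A' A'' F'' m πR πV2s f1 σ0 n hc hk)

end CaseADefs


section Inversions

variable {SA SB L : Type} (X : TS SA L) (Y : TS SB L) (F : Set L) (m : L)

lemma gedge_R_inv {s : SA} {s'' : SB} {l : L} {w : GS SA SB L}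
    (hg : GEdge X Y F m (.R s s'') l w) :
    (∃ t, w = .V t l true s'' ∧ l ∉ F ∧ l ≠ m ∧ X.step s l t) ∨
    (∃ t'', w = .V s l false t'' ∧ l ≠ m ∧ Y.step s'' l t'') := by
  cases hg with
  | chA h1 h2 h3 => exact Or.inl ⟨_, rfl, h1, h2, h3⟩
  | chA' h1 h2 => exact Or.inr ⟨_, rfl, h1, h2⟩

lemma fullEdge_Vtrue_inv {a : SA} {σl : L} {b : SB} {l : L} {w : GS SA SB L}
    (h : fullEdge X Y F m (.V a σl true b) l w) :
    (l = σl ∧ σl ∉ F ∧ σl ≠ m ∧ ∃ t', w = .R a t' ∧ Y.step b σl t') ∨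
    ((∀ l' u, ¬ GEdge X Y F m (.V a σl true b) l' u) ∧ l ∉ F ∧ l ≠ m ∧ w = .err) := by
  rcases h with hg | hfb
  · cases hg with
    | matchA' h1 h2 h3 => exact Or.inl ⟨rfl, h1, h2, _, rfl, h3⟩
  · exact Or.inr hfb

lemma fullEdge_Vfalse_inv {a : SA} {σl : L} {b : SB} {l : L} {w : GS SA SB L}
    (h : fullEdge X Y F m (.V a σl false b) l w) :
    (l = σl ∧ σl ∉ F ∧ σl ≠ m ∧ ∃ t, w = .R t b ∧ X.step a σl t) ∨
    (l = m ∧ σl ∈ F ∧ w = .R a b) ∨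
    ((∀ l' u, ¬ GEdge X Y F m (.V a σl false b) l' u) ∧ l ∉ F ∧ l ≠ m ∧ w = .err) := by
  rcases h with hg | hfb
  · cases hg with
    | matchA h1 h2 h3 => exact Or.inl ⟨rfl, h1, h2, _, rfl, h3⟩
    | mask h1 => exact Or.inr (Or.inl ⟨rfl, h1, rfl⟩)
  · exact Or.inr (Or.inr hfb)

end Inversions

section CaseAValid

set_option linter.unusedSectionVars false

variable {S S' S'' L : Type}
  (A : TS S L) (A' : TS S' L) (A'' : TS S'' L) (F' F'' : Set L) (m : L)
  (πR : Strat (GS S S'' L) L) (πV2s : Strat (GS S' S'' L) L)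
  (f1 : GS S S' L → L × GS S S' L) (σ0 : L)

/-- Every full edge out of a live refuter node of `G` is a basic edge. -/
lemma fullEdge_R_gedge (hA : ∀ s, ∃ e t, A.step s e t)
    (hSA : ∀ s e t, A.step s e t → e ∉ F'' ∧ e ≠ m)
    {s : S} {s'' : S''} {l : L} {w : GS S S'' L}
    (h : fullEdge A A'' F'' m (.R s s'') l w) : GEdge A A'' F'' m (.R s s'') l w := by
  obtain ⟨e, t, hstep⟩ := hA s
  exact fullEdge_gedge A A'' F'' m h
    (GEdge.chA (hSA s e t hstep).1 (hSA s e t hstep).2 hstep)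

/-- Every full edge out of a refuter node of `G2` is a basic edge. -/
lemma fullEdge_R2_gedge (hA'' : ∀ s'', ∃ e t'', A''.step s'' e t'')
    (hSA'' : ∀ s'' e t'', A''.step s'' e t'' → e ≠ m)
    {s' : S'} {s'' : S''} {l : L} {w : GS S' S'' L}
    (h : fullEdge A' A'' F'' m (.R s' s'') l w) : GEdge A' A'' F'' m (.R s' s'') l w := by
  obtain ⟨e, t, hstep⟩ := hA'' s''
  exact fullEdge_gedge A' A'' F'' m h (GEdge.chA' (hSA'' s'' e t hstep) hstep)

variable (hF : F' ⊆ F'') (hm : m ∉ F'')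
  (hσ0 : σ0 ∉ F'' ∧ σ0 ≠ m)
  (hπV2 : ∀ h v, isRefB v = false → fullEdge A' A'' F'' m v (πV2s h v).1 (πV2s h v).2)
  (hf1 : ∀ v, fullEdge A A' F' m v (f1 v).1 (f1 v).2)

lemma cmoveV_valid (hm : m ∉ F'') (hσ0 : σ0 ∉ F'' ∧ σ0 ≠ m)
    (hne'' : ∃ σl : L, σl ∉ F'' ∧ σl ≠ m) (hF : F' ⊆ F'')
    (hπV2 : ∀ h v, isRefB v = false → fullEdge A' A'' F'' m v (πV2s h v).1 (πV2s h v).2)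
    (hf1 : ∀ v, fullEdge A A' F' m v (f1 v).1 (f1 v).2)
    (v : GS S S'' L) (v2 : GS S' S'' L) (h2 : List (GS S' S'' L × L))
    (hv : isRefB v = false) :
    fullEdge A A'' F'' m v (cmoveV A A'' F'' m πV2s f1 σ0 v v2 h2).1
      (cmoveV A A'' F'' m πV2s f1 σ0 v v2 h2).2 := by
  have hdflt : ∀ u : GS S S'' L, fullEdge A A'' F'' m u (dfltMv A A'' F'' m u).1
      (dfltMv A A'' F'' m u).2 := dfltMv_spec A A'' F'' m hne''
  match v, v2 with
  | .R _ _, _ => simp [isRefB] at hv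
  | .err, _ => simp [isRefB] at hv
  | .V t σa true s''a, .R _ _ => exact hdflt _
  | .V t σa true s''a, .err => exact hdflt _
  | .V t σa true s''a, .V _ _ false _ => exact hdflt _
  | .V t σa false s''a, .R _ _ => exact hdflt _
  | .V t σa false s''a, .err => exact hdflt _
  | .V t σa false s''a, .V _ _ true _ => exact hdflt _
  | .V t σa true s''a, .V t' σb true s''b =>
    by_cases hcond : σb = σa ∧ s''b = s''a
    · obtain ⟨rfl, rfl⟩ := hcond
      have he2 := hπV2 h2 (.V t' σb true s''b) rfl
      rcases fullEdge_Vtrue_inv A' A'' F'' m he2 with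
        ⟨hl, hnF, hnm, t'', hw, hstep⟩ | ⟨hno, hlF, hlm, hw⟩
      · have hcm : cmoveV A A'' F'' m πV2s f1 σ0 (.V t σb true s''b) (.V t' σb true s''b) h2
            = (σb, .R t t'') := by
          simp only [cmoveV, if_pos (⟨rfl, rfl⟩ : σb = σb ∧ s''b = s''b), hw]
          simp
        rw [hcm]
        exact Or.inl (GEdge.matchA' hnF hnm hstep)
      · have hcm : cmoveV A A'' F'' m πV2s f1 σ0 (.V t σb true s''b) (.V t' σb true s''b) h2
            = (σ0, .err) := by
          simp only [cmoveV, if_pos (⟨rfl, rfl⟩ : σb = σb ∧ s''b = s''b), hw]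
          simp
        rw [hcm]
        refine Or.inr ⟨?_, hσ0.1, hσ0.2, rfl⟩
        intro l' u hg
        cases hg with
        | matchA' h1 h2' h3 => exact hno _ _ (GEdge.matchA' h1 h2' h3)
    · have hcm : cmoveV A A'' F'' m πV2s f1 σ0 (.V t σa true s''a) (.V t' σb true s''b) h2
          = dfltMv A A'' F'' m (.V t σa true s''a) := by
        simp only [cmoveV, if_neg hcond]
      rw [hcm]; exact hdflt _
  | .V sa σa false t''a, .V s'c σb false t''b =>
    by_cases hcond : σb = σa ∧ t''b = t''a
    · obtain ⟨rfl, rfl⟩ := hcond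
      by_cases hfa : σb ∈ F''
      · have hcm : cmoveV A A'' F'' m πV2s f1 σ0 (.V sa σb false t''b) (.V s'c σb false t''b) h2
            = (m, .R sa t''b) := by
          simp only [cmoveV, if_pos (⟨rfl, rfl⟩ : σb = σb ∧ t''b = t''b), if_pos hfa]
          simp
        rw [hcm]
        exact Or.inl (GEdge.mask hfa)
      · have he2 := hπV2 h2 (.V s'c σb false t''b) rfl
        rcases fullEdge_Vfalse_inv A' A'' F'' m he2 with
          ⟨hl, hnF, hnm, t', hw, hstep⟩ | ⟨hl, hFa, hw⟩ | ⟨hno, hlF, hlm, hw⟩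
        · have he1 := hf1 (.V sa σb false t')
          rcases fullEdge_Vfalse_inv A A' F' m he1 with
            ⟨hl1, hnF1, hnm1, tnew, hw1, hstep1⟩ | ⟨hl1, hFa1, hw1⟩ | ⟨hno1, hlF1, hlm1, hw1⟩
          · have hcm : cmoveV A A'' F'' m πV2s f1 σ0 (.V sa σb false t''b) (.V s'c σb false t''b) h2
                = (σb, .R tnew t''b) := by
              simp only [cmoveV, if_pos (⟨rfl, rfl⟩ : σb = σb ∧ t''b = t''b), if_neg hfa, hw, hw1]
              simp
            rw [hcm]
            exact Or.inl (GEdge.matchA hfa hnm hstep1)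
          · exact absurd hFa1 (fun hc => hfa (hF hc))
          · have hcm : cmoveV A A'' F'' m πV2s f1 σ0 (.V sa σb false t''b) (.V s'c σb false t''b) h2
                = dfltMv A A'' F'' m (.V sa σb false t''b) := by
              simp only [cmoveV, if_pos (⟨rfl, rfl⟩ : σb = σb ∧ t''b = t''b), if_neg hfa, hw, hw1]
              simp
            rw [hcm]; exact hdflt _
        · exact absurd hFa hfa
        · have hcm : cmoveV A A'' F'' m πV2s f1 σ0 (.V sa σb false t''b) (.V s'c σb false t''b) h2
              = dfltMv A A'' F'' m (.V sa σb false t''b) := by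
            simp only [cmoveV, if_pos (⟨rfl, rfl⟩ : σb = σb ∧ t''b = t''b), if_neg hfa, hw]
            simp
          rw [hcm]; exact hdflt _
    · have hcm : cmoveV A A'' F'' m πV2s f1 σ0 (.V sa σa false t''a) (.V s'c σb false t''b) h2
          = dfltMv A A'' F'' m (.V sa σa false t''a) := by
        simp only [cmoveV, if_neg hcond]
      rw [hcm]; exact hdflt _

lemma pVcomp_valid (hm : m ∉ F'') (hσ0 : σ0 ∉ F'' ∧ σ0 ≠ m)
    (hne'' : ∃ σl : L, σl ∉ F'' ∧ σl ≠ m) (hF : F' ⊆ F'')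
    (hπV2 : ∀ h v, isRefB v = false → fullEdge A' A'' F'' m v (πV2s h v).1 (πV2s h v).2)
    (hf1 : ∀ v, fullEdge A A' F' m v (f1 v).1 (f1 v).2)
    (h : List (GS S S'' L × L)) (v : GS S S'' L) (hv : isRefB v = false) :
    fullEdge A A'' F'' m v (pVcomp A A' A'' F'' m πR πV2s f1 σ0 h v).1
      (pVcomp A A' A'' F'' m πR πV2s f1 σ0 h v).2 := by
  rw [pVcomp]
  split
  · exact cmoveV_valid A A' A'' F' F'' m πV2s f1 σ0 hm hσ0 hne'' hF hπV2 hf1 _ _ _ hv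
  · exact dfltMv_spec A A'' F'' m hne'' v

lemma pR2_valid (hm : m ∉ F'') (hσ0 : σ0 ∉ F'' ∧ σ0 ≠ m)
    (hne'' : ∃ σl : L, σl ∉ F'' ∧ σl ≠ m) (hF : F' ⊆ F'')
    (hA : ∀ s, ∃ e t, A.step s e t)
    (hSA : ∀ s e t, A.step s e t → e ∉ F'' ∧ e ≠ m)
    (hπR : ∀ h v, isRefB v = true → fullEdge A A'' F'' m v (πR h v).1 (πR h v).2)
    (hf1 : ∀ v, fullEdge A A' F' m v (f1 v).1 (f1 v).2)
    (h2 : List (GS S' S'' L × L)) (v2 : GS S' S'' L) (hv : isRefB v2 = true) :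
    fullEdge A' A'' F'' m v2 (pR2 A A' A'' F'' m πR f1 σ0 h2 v2).1
      (pR2 A A' A'' F'' m πR f1 σ0 h2 v2).2 := by
  have hdflt : ∀ u : GS S' S'' L, fullEdge A' A'' F'' m u (dfltMv A' A'' F'' m u).1
      (dfltMv A' A'' F'' m u).2 := dfltMv_spec A' A'' F'' m hne''
  match v2 with
  | .V _ _ _ _ => simp [isRefB] at hv
  | .err =>
    refine Or.inr ⟨?_, hσ0.1, hσ0.2, rfl⟩
    intro l' u hg
    exact gedge_src_not_err A' A'' F'' m hg
  | .R s' s'' =>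
    set p := rstate A F'' m πR f1 (readSt m h2 (.R s' s'')) (h2.length / 2) with hp
    have hcR := hπR p.2 (.R p.1 s'') rfl
    have hgR := fullEdge_R_gedge A A'' F'' m hA hSA hcR
    rcases gedge_R_inv A A'' F'' m hgR with
      ⟨t, hw, hnF, hnm, hstep⟩ | ⟨t'', hw, hnm, hstep⟩
    · have he1 := hf1 (.V t (πR p.2 (.R p.1 s'')).1 true s')
      rcases fullEdge_Vtrue_inv A A' F' m he1 with
        ⟨hl1, hnF1, hnm1, t', hw1, hstep1⟩ | ⟨hno1, hlF1, hlm1, hw1⟩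
      · have hcm : pR2 A A' A'' F'' m πR f1 σ0 h2 (.R s' s'')
            = ((πR p.2 (.R p.1 s'')).1, .V t' (πR p.2 (.R p.1 s'')).1 true s'') := by
          simp only [pR2, ← hp, hw, hw1]
        rw [hcm]
        exact Or.inl (GEdge.chA (s := s') hnF hnm hstep1)
      · have hcm : pR2 A A' A'' F'' m πR f1 σ0 h2 (.R s' s'')
            = dfltMv A' A'' F'' m (.R s' s'') := by
          simp only [pR2, ← hp, hw, hw1]
        rw [hcm]; exact hdflt _
    · have hcm : pR2 A A' A'' F'' m πR f1 σ0 h2 (.R s' s'')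
          = ((πR p.2 (.R p.1 s'')).1, .V s' (πR p.2 (.R p.1 s'')).1 false t'') := by
        simp only [pR2, ← hp, hw]
      rw [hcm]
      exact Or.inl (GEdge.chA' hnm hstep)

end CaseAValid


section CaseAProj

set_option linter.unusedSectionVars false

variable {S S' S'' L : Type}
  (A : TS S L) (A' : TS S' L) (A'' : TS S'' L) (F'' : Set L) (m : L)
  (πR : Strat (GS S S'' L) L) (πV2s : Strat (GS S' S'' L) L)
  (f1 : GS S S' L → L × GS S S' L) (σ0 : L)

lemma readSt_hist {γ : Type} (junk : L) (ρ : ℕ → γ) (σ : ℕ → L) (n i : ℕ) (hi : i ≤ n) :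
    readSt junk (hist ρ σ n) (ρ n) i = (ρ i) := by
  rcases Nat.lt_or_ge i n with hlt | hge
  · rw [readSt, List.getD_eq_getElem _ _ (by simp [hist_length, hlt])]
    simp [hist]
  · have hin : i = n := le_antisymm hi hge
    subst hin
    rw [readSt, List.getD_eq_default _ _ (by simp [hist_length])]

lemma rstate_congr (g g' : ℕ → GS S' S'' L) :
    ∀ k, (∀ i, i ≤ 2*k → g i = g' i) →
      rstate A F'' m πR f1 g k = rstate A F'' m πR f1 g' k := by
  intro k
  induction k with
  | zero => intro _; rfl
  | succ j ih =>
    intro hag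
    have hj : rstate A F'' m πR f1 g j = rstate A F'' m πR f1 g' j :=
      ih (fun i hi => hag i (by omega))
    show rstate A F'' m πR f1 g (j+1) = rstate A F'' m πR f1 g' (j+1)
    rw [rstate, rstate, hj, hag (2*j) (by omega), hag (2*j+2) (by omega)]

lemma outG_proj (n : ℕ) :
    outSt isRefB πR (pVcomp A A' A'' F'' m πR πV2s f1 σ0) (GS.R A.init A''.init) n =
      (crun A A' A'' F'' m πR πV2s f1 σ0 n).v ∧
    hist (outSt isRefB πR (pVcomp A A' A'' F'' m πR πV2s f1 σ0) (GS.R A.init A''.init))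
        (outLb isRefB πR (pVcomp A A' A'' F'' m πR πV2s f1 σ0) (GS.R A.init A''.init)) n =
      (crun A A' A'' F'' m πR πV2s f1 σ0 n).h ∧
    (outLb isRefB πR (pVcomp A A' A'' F'' m πR πV2s f1 σ0) (GS.R A.init A''.init) n,
      outSt isRefB πR (pVcomp A A' A'' F'' m πR πV2s f1 σ0) (GS.R A.init A''.init) (n+1)) =
      gmoveOf A A' A'' F'' m πR πV2s f1 σ0 (crun A A' A'' F'' m πR πV2s f1 σ0 n) := by
  set pV := pVcomp A A' A'' F'' m πR πV2s f1 σ0 with hpV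
  set v0 : GS S S'' L := GS.R A.init A''.init with hv0
  induction n with
  | zero =>
    refine ⟨by rw [crun_zero]; rfl, by rw [crun_zero]; simp [hist], ?_⟩
    have hmv := out_move isRefB πR pV v0 0
    have h0 : outSt isRefB πR pV v0 0 = v0 := rfl
    have hh0 : hist (outSt isRefB πR pV v0) (outLb isRefB πR pV v0) 0 = [] := by simp [hist]
    rw [h0, hh0] at hmv
    rw [hmv, gmoveOf, crun_zero]
    rfl
  | succ k ih =>
    obtain ⟨ihst, ihh, ihmv⟩ := ih
    have hst : outSt isRefB πR pV v0 (k+1) = (crun A A' A'' F'' m πR πV2s f1 σ0 (k+1)).v := by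
      rw [crun_succ]
      exact congrArg Prod.snd ihmv
    have hh : hist (outSt isRefB πR pV v0) (outLb isRefB πR pV v0) (k+1) =
        (crun A A' A'' F'' m πR πV2s f1 σ0 (k+1)).h := by
      rw [hist_succ, ihh, ihst, crun_succ]
      have : outLb isRefB πR pV v0 k =
          (gmoveOf A A' A'' F'' m πR πV2s f1 σ0 (crun A A' A'' F'' m πR πV2s f1 σ0 k)).1 :=
        congrArg Prod.fst ihmv
      rw [this]
    refine ⟨hst, hh, ?_⟩
    have hmv := out_move isRefB πR pV v0 (k+1)
    rw [hst, hh] at hmv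
    by_cases hr : isRefB (crun A A' A'' F'' m πR πV2s f1 σ0 (k+1)).v = true
    · rw [if_pos hr] at hmv
      rw [gmoveOf, if_pos hr]
      exact hmv
    · rw [if_neg hr] at hmv
      rw [gmoveOf, if_neg hr]
      rw [hmv, hpV, pVcomp]
      rw [crun_h_length]
      rw [if_pos ⟨rfl, rfl⟩]

lemma outG2_proj (n : ℕ) :
    outSt isRefB (fun h2 v2 => pR2 A A' A'' F'' m πR f1 σ0 h2 v2) πV2s
        (GS.R A'.init A''.init) n = (crun A A' A'' F'' m πR πV2s f1 σ0 n).v2 ∧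
    hist (outSt isRefB (fun h2 v2 => pR2 A A' A'' F'' m πR f1 σ0 h2 v2) πV2s (GS.R A'.init A''.init))
        (outLb isRefB (fun h2 v2 => pR2 A A' A'' F'' m πR f1 σ0 h2 v2) πV2s (GS.R A'.init A''.init)) n =
      (crun A A' A'' F'' m πR πV2s f1 σ0 n).h2 ∧
    (outLb isRefB (fun h2 v2 => pR2 A A' A'' F'' m πR f1 σ0 h2 v2) πV2s (GS.R A'.init A''.init) n,
      outSt isRefB (fun h2 v2 => pR2 A A' A'' F'' m πR f1 σ0 h2 v2) πV2s (GS.R A'.init A''.init) (n+1)) =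
      g2moveOf A A' A'' F'' m πR πV2s f1 σ0 (crun A A' A'' F'' m πR πV2s f1 σ0 n) := by
  set pRs : Strat (GS S' S'' L) L := fun h2 v2 => pR2 A A' A'' F'' m πR f1 σ0 h2 v2 with hpRs
  set v0 : GS S' S'' L := GS.R A'.init A''.init with hv0
  induction n with
  | zero =>
    refine ⟨by rw [crun_zero]; rfl, by rw [crun_zero]; simp [hist], ?_⟩
    have hmv := out_move isRefB pRs πV2s v0 0
    have h0 : outSt isRefB pRs πV2s v0 0 = v0 := rfl
    have hh0 : hist (outSt isRefB pRs πV2s v0) (outLb isRefB pRs πV2s v0) 0 = [] := by simp [hist]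
    rw [h0, hh0] at hmv
    rw [hmv, g2moveOf, crun_zero]
  | succ k ih =>
    obtain ⟨ihst, ihh, ihmv⟩ := ih
    have hst : outSt isRefB pRs πV2s v0 (k+1) = (crun A A' A'' F'' m πR πV2s f1 σ0 (k+1)).v2 := by
      rw [crun_succ]
      exact congrArg Prod.snd ihmv
    have hh : hist (outSt isRefB pRs πV2s v0) (outLb isRefB pRs πV2s v0) (k+1) =
        (crun A A' A'' F'' m πR πV2s f1 σ0 (k+1)).h2 := by
      rw [hist_succ, ihh, ihst, crun_succ]
      have : outLb isRefB pRs πV2s v0 k =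
          (g2moveOf A A' A'' F'' m πR πV2s f1 σ0 (crun A A' A'' F'' m πR πV2s f1 σ0 k)).1 :=
        congrArg Prod.fst ihmv
      rw [this]
    refine ⟨hst, hh, ?_⟩
    have hmv := out_move isRefB pRs πV2s v0 (k+1)
    rw [hst, hh] at hmv
    by_cases hr : isRefB (crun A A' A'' F'' m πR πV2s f1 σ0 (k+1)).v2 = true
    · rw [if_pos hr] at hmv
      rw [g2moveOf, if_pos hr]
      exact hmv
    · rw [if_neg hr] at hmv
      rw [g2moveOf, if_neg hr]
      exact hmv

end CaseAProj


section CaseAMain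

set_option linter.unusedSectionVars false

open scoped Classical

variable {S S' S'' L : Type} [Finite S] [Finite S'] [Finite L]
  (A : TS S L) (A' : TS S' L) (A'' : TS S'' L) (F' F'' : Set L) (m : L)
  (πR : Strat (GS S S'' L) L) (πV2s : Strat (GS S' S'' L) L)
  (f1 : GS S S' L → L × GS S S' L) (σ0 : L)

/-- The simulation invariant at round `r` of the composed run. -/
def Bundle (r : ℕ) : Prop :=
  (crun A A' A'' F'' m πR πV2s f1 σ0 (2*r)).v2 ≠ .err →
  ∃ s s' s'', (crun A A' A'' F'' m πR πV2s f1 σ0 (2*r)).v = .R s s'' ∧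
    (crun A A' A'' F'' m πR πV2s f1 σ0 (2*r)).v2 = .R s' s'' ∧
    (GS.R s s' : GS S S' L) ∉ Ainf A A' F' m ∧
    rstate A F'' m πR f1 (fun i => (crun A A' A'' F'' m πR πV2s f1 σ0 i).v2) r
      = (s, (crun A A' A'' F'' m πR πV2s f1 σ0 (2*r)).h)

/-- The per-round facts needed for the payoff comparison. -/
def Facts (r : ℕ) : Prop :=
  (crun A A' A'' F'' m πR πV2s f1 σ0 (2*r)).v2 ≠ .err →
  ((gmoveOf A A' A'' F'' m πR πV2s f1 σ0 (crun A A' A'' F'' m πR πV2s f1 σ0 (2*r))).1 =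
     (g2moveOf A A' A'' F'' m πR πV2s f1 σ0 (crun A A' A'' F'' m πR πV2s f1 σ0 (2*r))).1 ∧
   (gmoveOf A A' A'' F'' m πR πV2s f1 σ0 (crun A A' A'' F'' m πR πV2s f1 σ0 (2*r))).2 ≠ .err ∧
   (g2moveOf A A' A'' F'' m πR πV2s f1 σ0 (crun A A' A'' F'' m πR πV2s f1 σ0 (2*r))).2 ≠ .err ∧
   (gmoveOf A A' A'' F'' m πR πV2s f1 σ0 (crun A A' A'' F'' m πR πV2s f1 σ0 (2*r+1))).1 ∉ F'' ∧
   (g2moveOf A A' A'' F'' m πR πV2s f1 σ0 (crun A A' A'' F'' m πR πV2s f1 σ0 (2*r+1))).1 ∉ F'' ∧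
   ((gmoveOf A A' A'' F'' m πR πV2s f1 σ0 (crun A A' A'' F'' m πR πV2s f1 σ0 (2*r+1))).2 = .err →
     (g2moveOf A A' A'' F'' m πR πV2s f1 σ0 (crun A A' A'' F'' m πR πV2s f1 σ0 (2*r+1))).2 = .err))

variable (hF : F' ⊆ F'') (hm : m ∉ F'') (hσ0 : σ0 ∉ F'' ∧ σ0 ≠ m)
  (hne'' : ∃ σl : L, σl ∉ F'' ∧ σl ≠ m)
  (hπR : ∀ h v, isRefB v = true → fullEdge A A'' F'' m v (πR h v).1 (πR h v).2)
  (hπV2 : ∀ h v, isRefB v = false → fullEdge A' A'' F'' m v (πV2s h v).1 (πV2s h v).2)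
  (hf1 : ∀ v, fullEdge A A' F' m v (f1 v).1 (f1 v).2)
  (hf1safe : ∀ v, isRefB v = false → v ∉ Ainf A A' F' m → (f1 v).2 ∉ Ainf A A' F' m)
  (hA : ∀ s, ∃ e t, A.step s e t)
  (hSA : ∀ s e t, A.step s e t → e ∉ F'' ∧ e ≠ m)

lemma step_main (hF : F' ⊆ F'') (hm : m ∉ F'') (hσ0 : σ0 ∉ F'' ∧ σ0 ≠ m)
    (hne'' : ∃ σl : L, σl ∉ F'' ∧ σl ≠ m)
    (hπR : ∀ h v, isRefB v = true → fullEdge A A'' F'' m v (πR h v).1 (πR h v).2)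
    (hπV2 : ∀ h v, isRefB v = false → fullEdge A' A'' F'' m v (πV2s h v).1 (πV2s h v).2)
    (hf1 : ∀ v, fullEdge A A' F' m v (f1 v).1 (f1 v).2)
    (hf1safe : ∀ v, isRefB v = false → v ∉ Ainf A A' F' m → (f1 v).2 ∉ Ainf A A' F' m)
    (hA : ∀ s, ∃ e t, A.step s e t)
    (hSA : ∀ s e t, A.step s e t → e ∉ F'' ∧ e ≠ m)
    (r : ℕ) (hB : Bundle A A' A'' F' F'' m πR πV2s f1 σ0 r) :
    Facts A A' A'' F'' m πR πV2s f1 σ0 r ∧ Bundle A A' A'' F' F'' m πR πV2s f1 σ0 (r+1) := by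
  by_cases halive : (crun A A' A'' F'' m πR πV2s f1 σ0 (2*r)).v2 = .err
  · constructor
    · intro h; exact absurd halive h
    · intro h2alive
      exfalso
      apply h2alive
      have h22 : 2*(r+1) = 2*r + 2 := by ring
      rw [h22]
      exact crun_err_mono A A' A'' F'' m πR πV2s f1 σ0 _ halive (by omega)
  · obtain ⟨s, s', s'', hv, hv2, hsafe, hrst⟩ := hB halive
    -- the refuter move in G
    have hcgfull := hπR (crun A A' A'' F'' m πR πV2s f1 σ0 (2*r)).h (.R s s'') rfl
    have hcg := fullEdge_R_gedge A A'' F'' m hA hSA hcgfull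
    set cg := πR (crun A A' A'' F'' m πR πV2s f1 σ0 (2*r)).h (.R s s'') with hcgdef
    -- the G-move at step 2r
    have hgm : gmoveOf A A' A'' F'' m πR πV2s f1 σ0 (crun A A' A'' F'' m πR πV2s f1 σ0 (2*r)) = cg := by
      rw [gmoveOf, if_pos (by rw [hv]; rfl), hv]
    -- the replayed state inside pR2
    have hpstate : rstate A F'' m πR f1
        (readSt m (crun A A' A'' F'' m πR πV2s f1 σ0 (2*r)).h2 (.R s' s''))
        ((crun A A' A'' F'' m πR πV2s f1 σ0 (2*r)).h2.length / 2)
        = (s, (crun A A' A'' F'' m πR πV2s f1 σ0 (2*r)).h) := by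
      rw [crun_h2_length]
      have hdiv : 2*r/2 = r := by omega
      rw [hdiv, ← hrst]
      apply rstate_congr
      intro i hi
      rw [crun_h2_eq_hist, ← hv2]
      exact readSt_hist m _ _ (2*r) i hi
    -- the G2-move at step 2r is given by pR2
    have hg2m : g2moveOf A A' A'' F'' m πR πV2s f1 σ0 (crun A A' A'' F'' m πR πV2s f1 σ0 (2*r)) =
        pR2 A A' A'' F'' m πR f1 σ0 (crun A A' A'' F'' m πR πV2s f1 σ0 (2*r)).h2 (.R s' s'') := by
      rw [g2moveOf, if_pos (by rw [hv2]; rfl), hv2]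
    rcases gedge_R_inv A A'' F'' m hcg with
      ⟨t, hw, hnF, hnm, hstep⟩ | ⟨t''g, hw, hnm, hstep⟩
    · -- refuter chose a move of A (chA)
      have hfault1 : ¬ isFaultV F' (GS.V t cg.1 true s' : GS S S' L) := by
        simp only [isFaultV]
        exact fun hc => hnF (hF hc)
      have hG1node : (GS.V t cg.1 true s' : GS S S' L) ∉ Ainf A A' F' m :=
        Ainf_not_ref A A' F' m hsafe rfl
          (Or.inl (GEdge.chA (fun hc => hnF (hF hc)) hnm hstep)) hfault1
      have hf1nerr := hf1safe (GS.V t cg.1 true s') rfl hG1node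
      have hf1full := hf1 (.V t cg.1 true s')
      rcases fullEdge_Vtrue_inv A A' F' m hf1full with
        ⟨hl1, hnF1, hnm1, t', hw1, hstep1⟩ | ⟨_, _, _, hw1⟩
      swap
      · rw [hw1] at hf1nerr
        exact absurd (err_mem_Ainf A A' F' m) hf1nerr
      rw [hw1] at hf1nerr
      have hpr2 : pR2 A A' A'' F'' m πR f1 σ0 (crun A A' A'' F'' m πR πV2s f1 σ0 (2*r)).h2
          (.R s' s'') = (cg.1, .V t' cg.1 true s'') := by
        simp only [pR2, hpstate, ← hcgdef, hw, hw1]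
      have hc1 : crun A A' A'' F'' m πR πV2s f1 σ0 (2*r+1) =
          ⟨.V t cg.1 true s'',
            (crun A A' A'' F'' m πR πV2s f1 σ0 (2*r)).h ++ [(.R s s'', cg.1)],
            .V t' cg.1 true s'',
            (crun A A' A'' F'' m πR πV2s f1 σ0 (2*r)).h2 ++ [(.R s' s'', cg.1)]⟩ := by
        rw [crun_succ, hgm, hg2m, hpr2, hv, hv2, hw]
      set h2' := (crun A A' A'' F'' m πR πV2s f1 σ0 (2*r)).h2 ++
        [((GS.R s' s'' : GS S' S'' L), cg.1)] with hh2'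
      have hc2full := hπV2 h2' (.V t' cg.1 true s'') rfl
      set c2 := πV2s h2' (.V t' cg.1 true s'') with hc2def
      have hg2m1 : g2moveOf A A' A'' F'' m πR πV2s f1 σ0
          (crun A A' A'' F'' m πR πV2s f1 σ0 (2*r+1)) = c2 := by
        rw [hc1, g2moveOf]
        rfl
      have hgm1 : gmoveOf A A' A'' F'' m πR πV2s f1 σ0
          (crun A A' A'' F'' m πR πV2s f1 σ0 (2*r+1)) =
          cmoveV A A'' F'' m πV2s f1 σ0 (.V t cg.1 true s'') (.V t' cg.1 true s'') h2' := by
        rw [hc1, gmoveOf]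
        rfl
      have hgl : (gmoveOf A A' A'' F'' m πR πV2s f1 σ0
          (crun A A' A'' F'' m πR πV2s f1 σ0 (2*r+1))).1 ∉ F'' := by
        rw [hgm1]
        exact fullEdge_V_label A A'' F'' m hm
          (cmoveV_valid A A' A'' F' F'' m πV2s f1 σ0 hm hσ0 hne'' hF hπV2 hf1 _ _ _ rfl)
      have hg2l : (g2moveOf A A' A'' F'' m πR πV2s f1 σ0
          (crun A A' A'' F'' m πR πV2s f1 σ0 (2*r+1))).1 ∉ F'' := by
        rw [hg2m1]
        exact fullEdge_V_label A' A'' F'' m hm hc2full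
      rcases fullEdge_Vtrue_inv A' A'' F'' m hc2full with
        ⟨hl2, hnF2, hnm2, t'', hw2, hstep2⟩ | ⟨hno2, hlF2, hlm2, hw2⟩
      · -- the verifier of G2 answers with a match
        have hcm1 : cmoveV A A'' F'' m πV2s f1 σ0 (.V t cg.1 true s'') (.V t' cg.1 true s'') h2'
            = (cg.1, .R t t'') := by
          simp only [cmoveV, if_pos (⟨rfl, rfl⟩ : cg.1 = cg.1 ∧ s'' = s''), ← hc2def, hw2]
          simp
        constructor
        · intro _
          refine ⟨by rw [hgm, hg2m, hpr2], by rw [hgm, hw]; simp, by rw [hg2m, hpr2]; simp,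
            hgl, hg2l, ?_⟩
          intro hh
          rw [hgm1, hcm1] at hh
          simp at hh
        · intro _
          have h22 : 2*(r+1) = (2*r+1)+1 := by ring
          have hc2' : crun A A' A'' F'' m πR πV2s f1 σ0 (2*(r+1)) =
              ⟨.R t t'',
                (crun A A' A'' F'' m πR πV2s f1 σ0 (2*r+1)).h ++ [(.V t cg.1 true s'', cg.1)],
                .R t' t'',
                (crun A A' A'' F'' m πR πV2s f1 σ0 (2*r+1)).h2 ++ [(.V t' cg.1 true s'', c2.1)]⟩ := by
            rw [h22, crun_succ, hgm1, hcm1, hg2m1, hw2]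
            rw [hc1]
          refine ⟨t, t', t'', by rw [hc2'], by rw [hc2'], hf1nerr, ?_⟩
          show rstate A F'' m πR f1 _ (r+1) = _
          rw [rstate]
          simp only [hv2, hrst, ← hcgdef, hw]
          rw [hc2', hc1]
          simp
      · -- the verifier of G2 is stuck: both games go to the error state
        have hcm1 : cmoveV A A'' F'' m πV2s f1 σ0 (.V t cg.1 true s'') (.V t' cg.1 true s'') h2'
            = (σ0, .err) := by
          simp only [cmoveV, if_pos (⟨rfl, rfl⟩ : cg.1 = cg.1 ∧ s'' = s''), ← hc2def, hw2]
          simp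
        constructor
        · intro _
          refine ⟨by rw [hgm, hg2m, hpr2], by rw [hgm, hw]; simp, by rw [hg2m, hpr2]; simp,
            hgl, hg2l, ?_⟩
          intro _
          rw [hg2m1, hw2]
        · intro halive2
          exfalso
          apply halive2
          have h22 : 2*(r+1) = (2*r+1)+1 := by ring
          rw [h22, crun_succ]
          show (g2moveOf A A' A'' F'' m πR πV2s f1 σ0 _).2 = _
          rw [hg2m1, hw2]
    · -- refuter chose a move of A'' (chA')
      have hpr2 : pR2 A A' A'' F'' m πR f1 σ0 (crun A A' A'' F'' m πR πV2s f1 σ0 (2*r)).h2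
          (.R s' s'') = (cg.1, .V s' cg.1 false t''g) := by
        simp only [pR2, hpstate, ← hcgdef, hw]
      have hc1 : crun A A' A'' F'' m πR πV2s f1 σ0 (2*r+1) =
          ⟨.V s cg.1 false t''g,
            (crun A A' A'' F'' m πR πV2s f1 σ0 (2*r)).h ++ [(.R s s'', cg.1)],
            .V s' cg.1 false t''g,
            (crun A A' A'' F'' m πR πV2s f1 σ0 (2*r)).h2 ++ [(.R s' s'', cg.1)]⟩ := by
        rw [crun_succ, hgm, hg2m, hpr2, hv, hv2, hw]
      set h2' := (crun A A' A'' F'' m πR πV2s f1 σ0 (2*r)).h2 ++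
        [((GS.R s' s'' : GS S' S'' L), cg.1)] with hh2'
      have hc2full := hπV2 h2' (.V s' cg.1 false t''g) rfl
      set c2 := πV2s h2' (.V s' cg.1 false t''g) with hc2def
      have hg2m1 : g2moveOf A A' A'' F'' m πR πV2s f1 σ0
          (crun A A' A'' F'' m πR πV2s f1 σ0 (2*r+1)) = c2 := by
        rw [hc1, g2moveOf]
        rfl
      have hgm1 : gmoveOf A A' A'' F'' m πR πV2s f1 σ0
          (crun A A' A'' F'' m πR πV2s f1 σ0 (2*r+1)) =
          cmoveV A A'' F'' m πV2s f1 σ0 (.V s cg.1 false t''g) (.V s' cg.1 false t''g) h2' := by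
        rw [hc1, gmoveOf]
        rfl
      have hgl : (gmoveOf A A' A'' F'' m πR πV2s f1 σ0
          (crun A A' A'' F'' m πR πV2s f1 σ0 (2*r+1))).1 ∉ F'' := by
        rw [hgm1]
        exact fullEdge_V_label A A'' F'' m hm
          (cmoveV_valid A A' A'' F' F'' m πV2s f1 σ0 hm hσ0 hne'' hF hπV2 hf1 _ _ _ rfl)
      have hg2l : (g2moveOf A A' A'' F'' m πR πV2s f1 σ0
          (crun A A' A'' F'' m πR πV2s f1 σ0 (2*r+1))).1 ∉ F'' := by
        rw [hg2m1]
        exact fullEdge_V_label A' A'' F'' m hm hc2full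
      have hfactshead : (gmoveOf A A' A'' F'' m πR πV2s f1 σ0
            (crun A A' A'' F'' m πR πV2s f1 σ0 (2*r))).1 =
          (g2moveOf A A' A'' F'' m πR πV2s f1 σ0 (crun A A' A'' F'' m πR πV2s f1 σ0 (2*r))).1 ∧
          (gmoveOf A A' A'' F'' m πR πV2s f1 σ0 (crun A A' A'' F'' m πR πV2s f1 σ0 (2*r))).2 ≠ .err ∧
          (g2moveOf A A' A'' F'' m πR πV2s f1 σ0 (crun A A' A'' F'' m πR πV2s f1 σ0 (2*r))).2 ≠ .err :=
        ⟨by rw [hgm, hg2m, hpr2], by rw [hgm, hw]; simp, by rw [hg2m, hpr2]; simp⟩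
      by_cases hfa : cg.1 ∈ F''
      · -- a fault round: the move is masked in both games
        have hcm1 : cmoveV A A'' F'' m πV2s f1 σ0 (.V s cg.1 false t''g)
            (.V s' cg.1 false t''g) h2' = (m, .R s t''g) := by
          simp only [cmoveV, if_pos (⟨rfl, rfl⟩ : cg.1 = cg.1 ∧ t''g = t''g), if_pos hfa]
          simp
        rcases fullEdge_Vfalse_inv A' A'' F'' m hc2full with
          ⟨hl2, hnF2, hnm2, t', hw2, hstep2⟩ | ⟨hl2, hF2, hw2⟩ | ⟨hno2, hlF2, hlm2, hw2⟩
        · exact absurd hfa hnF2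
        swap
        · exact absurd (GEdge.mask hfa) (hno2 m (.R s' t''g))
        constructor
        · intro _
          refine ⟨hfactshead.1, hfactshead.2.1, hfactshead.2.2, hgl, hg2l, ?_⟩
          intro hh
          rw [hgm1, hcm1] at hh
          simp at hh
        · intro _
          have h22 : 2*(r+1) = (2*r+1)+1 := by ring
          have hc2' : crun A A' A'' F'' m πR πV2s f1 σ0 (2*(r+1)) =
              ⟨.R s t''g,
                (crun A A' A'' F'' m πR πV2s f1 σ0 (2*r+1)).h ++ [(.V s cg.1 false t''g, m)],
                .R s' t''g,
                (crun A A' A'' F'' m πR πV2s f1 σ0 (2*r+1)).h2 ++ [(.V s' cg.1 false t''g, c2.1)]⟩ := by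
            rw [h22, crun_succ, hgm1, hcm1, hg2m1, hw2]
            rw [hc1]
          refine ⟨s, s', t''g, by rw [hc2'], by rw [hc2'], hsafe, ?_⟩
          show rstate A F'' m πR f1 _ (r+1) = _
          rw [rstate]
          simp only [hv2, hrst, ← hcgdef, hw, if_pos hfa]
          rw [hc2', hc1]
          simp
      · -- a non-fault round on the A'' side
        rcases fullEdge_Vfalse_inv A' A'' F'' m hc2full with
          ⟨hl2, hnF2, hnm2, t', hw2, hstep2⟩ | ⟨hl2, hF2, hw2⟩ | ⟨hno2, hlF2, hlm2, hw2⟩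
        · -- the verifier of G2 answers with a matching A' move
          have hfault1 : ¬ isFaultV F' (GS.V s cg.1 false t' : GS S S' L) := by
            simp only [isFaultV]
            exact fun hc => hfa (hF hc)
          have hG1node : (GS.V s cg.1 false t' : GS S S' L) ∉ Ainf A A' F' m :=
            Ainf_not_ref A A' F' m hsafe rfl
              (Or.inl (GEdge.chA' hnm2 hstep2)) hfault1
          have hf1nerr := hf1safe (GS.V s cg.1 false t') rfl hG1node
          have hf1full := hf1 (.V s cg.1 false t')
          rcases fullEdge_Vfalse_inv A A' F' m hf1full with
            ⟨hl1, hnF1, hnm1, tnew, hw1, hstep1⟩ | ⟨hl1, hF1, hw1⟩ | ⟨_, _, _, hw1⟩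
          swap
          · exact absurd hF1 (fun hc => hfa (hF hc))
          swap
          · rw [hw1] at hf1nerr
            exact absurd (err_mem_Ainf A A' F' m) hf1nerr
          rw [hw1] at hf1nerr
          have hcm1 : cmoveV A A'' F'' m πV2s f1 σ0 (.V s cg.1 false t''g)
              (.V s' cg.1 false t''g) h2' = (cg.1, .R tnew t''g) := by
            simp only [cmoveV, if_pos (⟨rfl, rfl⟩ : cg.1 = cg.1 ∧ t''g = t''g), if_neg hfa,
              ← hc2def, hw2, hw1]
            simp
          constructor
          · intro _
            refine ⟨hfactshead.1, hfactshead.2.1, hfactshead.2.2, hgl, hg2l, ?_⟩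
            intro hh
            rw [hgm1, hcm1] at hh
            simp at hh
          · intro _
            have h22 : 2*(r+1) = (2*r+1)+1 := by ring
            have hc2' : crun A A' A'' F'' m πR πV2s f1 σ0 (2*(r+1)) =
                ⟨.R tnew t''g,
                  (crun A A' A'' F'' m πR πV2s f1 σ0 (2*r+1)).h ++ [(.V s cg.1 false t''g, cg.1)],
                  .R t' t''g,
                  (crun A A' A'' F'' m πR πV2s f1 σ0 (2*r+1)).h2 ++ [(.V s' cg.1 false t''g, c2.1)]⟩ := by
              rw [h22, crun_succ, hgm1, hcm1, hg2m1, hw2]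
              rw [hc1]
            refine ⟨tnew, t', t''g, by rw [hc2'], by rw [hc2'], hf1nerr, ?_⟩
            show rstate A F'' m πR f1 _ (r+1) = _
            rw [rstate]
            simp only [hv2, hrst, ← hcgdef, hw, if_neg hfa]
            have hread : (crun A A' A'' F'' m πR πV2s f1 σ0 (2*r+2)).v2 = .R t' t''g := by
              have h22' : 2*r+2 = 2*(r+1) := by ring
              rw [h22', hc2']
            simp only [hread, hw1]
            rw [hc2', hc1]
            simp
        · exact absurd hF2 hfa
        · -- the verifier of G2 is stuck: G2 goes to the error state
          have hcm1 : cmoveV A A'' F'' m πV2s f1 σ0 (.V s cg.1 false t''g)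
              (.V s' cg.1 false t''g) h2' = dfltMv A A'' F'' m (.V s cg.1 false t''g) := by
            simp only [cmoveV, if_pos (⟨rfl, rfl⟩ : cg.1 = cg.1 ∧ t''g = t''g), if_neg hfa,
              ← hc2def, hw2]
            simp
          constructor
          · intro _
            refine ⟨hfactshead.1, hfactshead.2.1, hfactshead.2.2, hgl, hg2l, ?_⟩
            intro _
            rw [hg2m1, hw2]
          · intro halive2
            exfalso
            apply halive2
            have h22 : 2*(r+1) = (2*r+1)+1 := by ring
            rw [h22, crun_succ]
            show (g2moveOf A A' A'' F'' m πR πV2s f1 σ0 _).2 = _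
            rw [hg2m1, hw2]

end CaseAMain


section CaseAFinal

set_option linter.unusedSectionVars false

open scoped Classical

variable {S S' S'' L : Type} [Finite S] [Finite S'] [Finite L]
  (A : TS S L) (A' : TS S' L) (A'' : TS S'' L) (F' F'' : Set L) (m : L)
  (πR : Strat (GS S S'' L) L) (πV2s : Strat (GS S' S'' L) L)
  (f1 : GS S S' L → L × GS S S' L) (σ0 : L)

variable (hF : F' ⊆ F'') (hm : m ∉ F'') (hσ0 : σ0 ∉ F'' ∧ σ0 ≠ m)
  (hne'' : ∃ σl : L, σl ∉ F'' ∧ σl ≠ m)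
  (hπR : ∀ h v, isRefB v = true → fullEdge A A'' F'' m v (πR h v).1 (πR h v).2)
  (hπV2 : ∀ h v, isRefB v = false → fullEdge A' A'' F'' m v (πV2s h v).1 (πV2s h v).2)
  (hf1 : ∀ v, fullEdge A A' F' m v (f1 v).1 (f1 v).2)
  (hf1safe : ∀ v, isRefB v = false → v ∉ Ainf A A' F' m → (f1 v).2 ∉ Ainf A A' F' m)
  (hA : ∀ s, ∃ e t, A.step s e t)
  (hSA : ∀ s e t, A.step s e t → e ∉ F'' ∧ e ≠ m)
  (hinit : (GS.R A.init A'.init : GS S S' L) ∉ Ainf A A' F' m)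

lemma bundle_all (hF : F' ⊆ F'') (hm : m ∉ F'') (hσ0 : σ0 ∉ F'' ∧ σ0 ≠ m)
    (hne'' : ∃ σl : L, σl ∉ F'' ∧ σl ≠ m)
    (hπR : ∀ h v, isRefB v = true → fullEdge A A'' F'' m v (πR h v).1 (πR h v).2)
    (hπV2 : ∀ h v, isRefB v = false → fullEdge A' A'' F'' m v (πV2s h v).1 (πV2s h v).2)
    (hf1 : ∀ v, fullEdge A A' F' m v (f1 v).1 (f1 v).2)
    (hf1safe : ∀ v, isRefB v = false → v ∉ Ainf A A' F' m → (f1 v).2 ∉ Ainf A A' F' m)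
    (hA : ∀ s, ∃ e t, A.step s e t)
    (hSA : ∀ s e t, A.step s e t → e ∉ F'' ∧ e ≠ m)
    (hinit : (GS.R A.init A'.init : GS S S' L) ∉ Ainf A A' F' m) :
    ∀ r, Bundle A A' A'' F' F'' m πR πV2s f1 σ0 r := by
  have hB0 : Bundle A A' A'' F' F'' m πR πV2s f1 σ0 0 := by
    intro _
    refine ⟨A.init, A'.init, A''.init, ?_, ?_, hinit, ?_⟩
    · rw [(by norm_num : 2*0 = 0), crun_zero]
    · rw [(by norm_num : 2*0 = 0), crun_zero]
    · rw [(by norm_num : 2*0 = 0), crun_zero]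
      rfl
  intro r
  induction r with
  | zero => exact hB0
  | succ k ih =>
    exact (step_main A A' A'' F' F'' m πR πV2s f1 σ0 hF hm hσ0 hne'' hπR hπV2 hf1 hf1safe
      hA hSA k ih).2

lemma facts_all (hF : F' ⊆ F'') (hm : m ∉ F'') (hσ0 : σ0 ∉ F'' ∧ σ0 ≠ m)
    (hne'' : ∃ σl : L, σl ∉ F'' ∧ σl ≠ m)
    (hπR : ∀ h v, isRefB v = true → fullEdge A A'' F'' m v (πR h v).1 (πR h v).2)
    (hπV2 : ∀ h v, isRefB v = false → fullEdge A' A'' F'' m v (πV2s h v).1 (πV2s h v).2)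
    (hf1 : ∀ v, fullEdge A A' F' m v (f1 v).1 (f1 v).2)
    (hf1safe : ∀ v, isRefB v = false → v ∉ Ainf A A' F' m → (f1 v).2 ∉ Ainf A A' F' m)
    (hA : ∀ s, ∃ e t, A.step s e t)
    (hSA : ∀ s e t, A.step s e t → e ∉ F'' ∧ e ≠ m)
    (hinit : (GS.R A.init A'.init : GS S S' L) ∉ Ainf A A' F' m) :
    ∀ r, Facts A A' A'' F'' m πR πV2s f1 σ0 r := by
  intro r
  exact (step_main A A' A'' F' F'' m πR πV2s f1 σ0 hF hm hσ0 hne'' hπR hπV2 hf1 hf1safe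
    hA hSA r (bundle_all A A' A'' F' F'' m πR πV2s f1 σ0 hF hm hσ0 hne'' hπR hπV2 hf1
      hf1safe hA hSA hinit r)).1

lemma caseA_payoff_le (hF : F' ⊆ F'') (hm : m ∉ F'') (hσ0 : σ0 ∉ F'' ∧ σ0 ≠ m)
    (hne'' : ∃ σl : L, σl ∉ F'' ∧ σl ≠ m)
    (hπR : ∀ h v, isRefB v = true → fullEdge A A'' F'' m v (πR h v).1 (πR h v).2)
    (hπV2 : ∀ h v, isRefB v = false → fullEdge A' A'' F'' m v (πV2s h v).1 (πV2s h v).2)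
    (hf1 : ∀ v, fullEdge A A' F' m v (f1 v).1 (f1 v).2)
    (hf1safe : ∀ v, isRefB v = false → v ∉ Ainf A A' F' m → (f1 v).2 ∉ Ainf A A' F' m)
    (hA : ∀ s, ∃ e t, A.step s e t)
    (hSA : ∀ s e t, A.step s e t → e ∉ F'' ∧ e ≠ m)
    (hinit : (GS.R A.init A'.init : GS S S' L) ∉ Ainf A A' F' m) :
    payoff F'' GS.err
      (outSt isRefB πR (pVcomp A A' A'' F'' m πR πV2s f1 σ0) (GS.R A.init A''.init))
      (outLb isRefB πR (pVcomp A A' A'' F'' m πR πV2s f1 σ0) (GS.R A.init A''.init)) ≤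
    payoff F'' GS.err
      (outSt isRefB (fun h2 v2 => pR2 A A' A'' F'' m πR f1 σ0 h2 v2) πV2s (GS.R A'.init A''.init))
      (outLb isRefB (fun h2 v2 => pR2 A A' A'' F'' m πR f1 σ0 h2 v2) πV2s (GS.R A'.init A''.init)) := by
  set ρ := outSt isRefB πR (pVcomp A A' A'' F'' m πR πV2s f1 σ0) (GS.R A.init A''.init) with hρ
  set σG := outLb isRefB πR (pVcomp A A' A'' F'' m πR πV2s f1 σ0) (GS.R A.init A''.init) with hσG
  set ρ2 := outSt isRefB (fun h2 v2 => pR2 A A' A'' F'' m πR f1 σ0 h2 v2) πV2s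
    (GS.R A'.init A''.init) with hρ2
  set σ2 := outLb isRefB (fun h2 v2 => pR2 A A' A'' F'' m πR f1 σ0 h2 v2) πV2s
    (GS.R A'.init A''.init) with hσ2
  have hp1 : IsPlay (fullEdge A A'' F'' m) (GS.R A.init A''.init) ρ σG :=
    out_isPlay isRefB _ _ _ hπR
      (fun h v hv => pVcomp_valid A A' A'' F' F'' m πR πV2s f1 σ0 hm hσ0 hne'' hF hπV2 hf1 h v hv)
  have hp2 : IsPlay (fullEdge A' A'' F'' m) (GS.R A'.init A''.init) ρ2 σ2 :=
    out_isPlay isRefB _ _ _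
      (fun h2 v2 hv2 => pR2_valid A A' A'' F' F'' m πR f1 σ0 hm hσ0 hne'' hF hA hSA hπR hf1 h2 v2 hv2)
      hπV2
  apply payoff_cmp A A'' A' A'' F'' m hp1 hp2
  intro n hpre
  -- liveness of the composed run up to the relevant time
  have halive : ∀ k, k ≤ n → (crun A A' A'' F'' m πR πV2s f1 σ0 k).v2 ≠ .err := by
    intro k hk
    have : ρ2 k ≠ .err := by
      rcases Nat.eq_zero_or_pos k with hk0 | hkpos
      · subst hk0
        rw [hp2.1]
        simp
      · obtain ⟨j, rfl⟩ := Nat.exists_eq_succ_of_ne_zero (Nat.pos_iff_ne_zero.mp hkpos)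
        exact hpre j (by omega)
    rw [hρ2] at this
    rw [← (outG2_proj A A' A'' F'' m πR πV2s f1 σ0 k).1]
    exact this
  have hstG : ∀ k, ρ k = (crun A A' A'' F'' m πR πV2s f1 σ0 k).v :=
    fun k => (outG_proj A A' A'' F'' m πR πV2s f1 σ0 k).1
  have hlbG : ∀ k, σG k = (gmoveOf A A' A'' F'' m πR πV2s f1 σ0
      (crun A A' A'' F'' m πR πV2s f1 σ0 k)).1 :=
    fun k => congrArg Prod.fst (outG_proj A A' A'' F'' m πR πV2s f1 σ0 k).2.2
  have hstG' : ∀ k, ρ (k+1) = (gmoveOf A A' A'' F'' m πR πV2s f1 σ0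
      (crun A A' A'' F'' m πR πV2s f1 σ0 k)).2 :=
    fun k => congrArg Prod.snd (outG_proj A A' A'' F'' m πR πV2s f1 σ0 k).2.2
  have hlbG2 : ∀ k, σ2 k = (g2moveOf A A' A'' F'' m πR πV2s f1 σ0
      (crun A A' A'' F'' m πR πV2s f1 σ0 k)).1 :=
    fun k => congrArg Prod.fst (outG2_proj A A' A'' F'' m πR πV2s f1 σ0 k).2.2
  have hstG2' : ∀ k, ρ2 (k+1) = (g2moveOf A A' A'' F'' m πR πV2s f1 σ0
      (crun A A' A'' F'' m πR πV2s f1 σ0 k)).2 :=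
    fun k => congrArg Prod.snd (outG2_proj A A' A'' F'' m πR πV2s f1 σ0 k).2.2
  rcases Nat.even_or_odd n with ⟨r, hr⟩ | ⟨r, hr⟩
  · -- even step: a refuter move
    have hn : n = 2*r := by omega
    subst hn
    have hfacts := facts_all A A' A'' F' F'' m πR πV2s f1 σ0 hF hm hσ0 hne'' hπR hπV2 hf1
      hf1safe hA hSA hinit r (halive (2*r) le_rfl)
    constructor
    · rw [hlbG (2*r), hlbG2 (2*r), hfacts.1]
    · intro hc
      rw [hstG' (2*r)] at hc
      exact absurd hc hfacts.2.1
  · -- odd step: a verifier move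
    have hn : n = 2*r+1 := by omega
    subst hn
    have hfacts := facts_all A A' A'' F' F'' m πR πV2s f1 σ0 hF hm hσ0 hne'' hπR hπV2 hf1
      hf1safe hA hSA hinit r (halive (2*r) (by omega))
    constructor
    · rw [hlbG (2*r+1), hlbG2 (2*r+1)]
      constructor
      · intro hc; exact absurd hc hfacts.2.2.2.1
      · intro hc; exact absurd hc hfacts.2.2.2.2.1
    · intro hc
      rw [hstG' (2*r+1)] at hc
      rw [hstG2' (2*r+1)]
      exact hfacts.2.2.2.2.2 hc

end CaseAFinal

/-- the masking distance satisfies the triangle inequality: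
for `A` (nominal), `A'` with fault set `F'`, and `A''` with fault set
`F'' ⊇ F'`, `δ_m(A, A'') ≤ δ_m(A, A') + δ_m(A', A'')`. -/
theorem masking_distance_triangle {S S' S'' L : Type}
    [Finite S] [Finite S'] [Finite S''] [Finite L]
    (A : TS S L) (A' : TS S' L) (A'' : TS S'' L)
    (F' F'' : Set L) (m : L) (hF : F' ⊆ F'') (hm : m ∉ F'')
    (hne : ∃ σ : L, σ ∉ F'' ∧ σ ≠ m)
    (hA : ∀ s, ∃ e t, A.step s e t)
    (hA' : ∀ s', ∃ e t', A'.step s' e t')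
    (hA'' : ∀ s'', ∃ e t'', A''.step s'' e t'')
    (hSA : ∀ s e t, A.step s e t → e ∉ F'' ∧ e ≠ m)
    (hSA' : ∀ s' e t', A'.step s' e t' → e ≠ m)
    (hSA'' : ∀ s'' e t'', A''.step s'' e t'' → e ≠ m) :
    maskingValue A A'' F'' m ≤
      maskingValue A A' F' m + maskingValue A' A'' F'' m := by
  classical
  obtain ⟨σ0, hσ0⟩ := hne
  have hneF' : ∃ σl : L, σl ∉ F' ∧ σl ≠ m := ⟨σ0, fun hc => hσ0.1 (hF hc), hσ0.2⟩
  have hne'' : ∃ σl : L, σl ∉ F'' ∧ σl ≠ m := ⟨σ0, hσ0⟩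
  have hmF' : m ∉ F' := fun hc => hm (hF hc)
  by_cases hinit : (GS.R A.init A'.init : GS S S' L) ∈ Ainf A A' F' m
  · -- Case B: the refuter wins the fault-free reachability game on G1,
    -- hence the first masking distance is 1 and the bound is trivial.
    have h1 : maskingValue A A'' F'' m ≤ 1 := maskingValue_le_one A A'' F'' m hne''
    have h3 : 0 ≤ maskingValue A' A'' F'' m := maskingValue_nonneg A' A'' F'' m hne''
    have h2 : (1:ℝ) ≤ maskingValue A A' F' m := by
      haveI := vstrat_nonempty A A' F' m hneF'
      refine le_trans ?_ (le_maskingValue A A' F' m hneF' (attrStrat A A' F' m hneF'))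
      apply le_ciInf
      intro πV
      rw [attr_pay_one A A' F' m hneF' hmF' hinit πV]
    linarith
  · -- Case A: the verifier wins the safety game on G1; compose strategies.
    set f1 : GS S S' L → L × GS S S' L := safeMv A A' F' m with hf1def
    have hf1 : ∀ v, fullEdge A A' F' m v (f1 v).1 (f1 v).2 :=
      fun v => safeMv_spec A A' F' m hneF' v
    have hf1safe : ∀ v, isRefB v = false → v ∉ Ainf A A' F' m → (f1 v).2 ∉ Ainf A A' F' m :=
      fun v hv h => safeMv_safe A A' F' m hv h
    have h0 : 0 ≤ maskingValue A A' F' m := maskingValue_nonneg A A' F' m hneF'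
    have hmain : maskingValue A A'' F'' m ≤ maskingValue A' A'' F'' m := by
      apply maskingValue_le A A'' F'' m hne''
      intro πRst
      set πR2st : RStrat A' A'' F'' m :=
        ⟨fun h2 v2 => pR2 A A' A'' F'' m πRst.1 f1 σ0 h2 v2,
          fun h2 v2 hv2 => pR2_valid A A' A'' F' F'' m πRst.1 f1 σ0 hm hσ0 hne'' hF hA hSA
            πRst.2 hf1 h2 v2 hv2⟩ with hπR2st
      refine le_trans ?_ (le_maskingValue A' A'' F'' m hne'' πR2st)
      haveI := vstrat_nonempty A' A'' F'' m hne''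
      apply le_ciInf
      intro πV2
      set πVc : VStrat A A'' F'' m :=
        ⟨pVcomp A A' A'' F'' m πRst.1 πV2.1 f1 σ0,
          fun h v hv => pVcomp_valid A A' A'' F' F'' m πRst.1 πV2.1 f1 σ0 hm hσ0 hne'' hF
            πV2.2 hf1 h v hv⟩ with hπVc
      refine le_trans (ciInf_le (inner_bddBelow A A'' F'' m πRst) πVc) ?_
      exact caseA_payoff_le A A' A'' F' F'' m πRst.1 πV2.1 f1 σ0 hF hm hσ0 hne''
        πRst.2 πV2.2 hf1 hf1safe hA hSA hinit
    linarith
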